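/- arXiv:2407.15900 — 8 statements merged into one kernel-verified Lean document; each statement's English description precedes it below -/
import Mathlib

section
/- Let F : ℝ → ℝ be monotone nondecreasing with 0 ≤ F(x) ≤ 1 for all x, let τ ∈ ℝ be a threshold and y ∈ ℝ an observation. Define the distribution function censored at τ by F̃_τ(x) = 0 if x < τ and F̃_τ(x) = F(x) if x ≥ τ. Then twCRPS_τ(F, y) = CRPS(F̃_τ, v_τ(y)), i.e. the threshold-weighted CRPS of F at y equals the CRPS of the censored distribution evaluated at the censored observation v_τ(y) = max(y, τ). -/
open MeasureTheory Set

/-- Threshold-weighted CRPS: `twCRPS_τ(F, y) = ∫_τ^∞ (F(z) − 𝟙{z ≥ y})² dz`. -/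
noncomputable def twCRPS (F : ℝ → ℝ) (τ y : ℝ) : ℝ :=
  ∫ z in Set.Ioi τ, (F z - if y ≤ z then (1 : ℝ) else 0) ^ 2

/-- CRPS: `CRPS(F, y) = ∫_{-∞}^∞ (F(z) − 𝟙{z ≥ y})² dz`. -/
noncomputable def CRPS (F : ℝ → ℝ) (y : ℝ) : ℝ :=
  ∫ z, (F z - if y ≤ z then (1 : ℝ) else 0) ^ 2

/-- Distribution function censored at `τ`. -/
noncomputable def censor (F : ℝ → ℝ) (τ : ℝ) : ℝ → ℝ :=
  fun x => if x < τ then 0 else F x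

theorem twCRPS_eq_CRPS_censored (F : ℝ → ℝ) (hF : Monotone F)
    (h0 : ∀ x, 0 ≤ F x) (h1 : ∀ x, F x ≤ 1) (τ y : ℝ) :
    twCRPS F τ y = CRPS (censor F τ) (max y τ) := by
  rw [twCRPS, CRPS, ← integral_indicator measurableSet_Ioi]
  apply integral_congr_ae
  have hτ : (volume : Measure ℝ) {τ} = 0 := Real.volume_singleton
  filter_upwards [compl_mem_ae_iff.2 hτ] with z hz
  simp only [Set.mem_compl_iff, Set.mem_singleton_iff] at hz
  rcases lt_trichotomy z τ with h | h | h
  · have h1 : ¬ max y τ ≤ z := fun hc => absurd (le_trans (le_max_right y τ) hc) h.not_ge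
    simp [Set.indicator, Set.mem_Ioi, h.not_gt, censor, h, h1]
  · exact absurd h hz
  · have h2 : (max y τ ≤ z) ↔ (y ≤ z) := by
      rw [max_le_iff]; exact ⟨fun ⟨a, _⟩ => a, fun a => ⟨a, h.le⟩⟩
    simp [Set.indicator, Set.mem_Ioi, h, censor, not_lt.2 h.le, h2]
end

section
/- Let F : ℝ → ℝ be monotone nondecreasing with 0 ≤ F(x) ≤ 1 for all x, let τ ∈ ℝ and y ∈ ℝ. Assume z ↦ F(z)² is integrable on (−∞, τ] and z ↦ (F(z) − 1)² is integrable on [v_τ(y), ∞). Then twCRPS_τ(F, y) = CRPS(F, v_τ(y)) − Δ_F, where Δ_F = ∫_{-∞}^{τ} F(z)² dz is a correction term depending only on F and τ. -/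
open MeasureTheory Set

theorem twCRPS_eq_CRPS_sub_correction (F : ℝ → ℝ) (hF : Monotone F)
    (h0 : ∀ x, 0 ≤ F x) (h1 : ∀ x, F x ≤ 1) (τ y : ℝ)
    (hint1 : IntegrableOn (fun z => (F z) ^ 2) (Set.Iic τ))
    (hint2 : IntegrableOn (fun z => (F z - 1) ^ 2) (Set.Ici (max y τ))) :
    twCRPS F τ y = CRPS F (max y τ) - ∫ z in Set.Iic τ, (F z) ^ 2 := by
  set m := max y τ with hm
  have hτm : τ ≤ m := le_max_right y τ
  set g : ℝ → ℝ := fun z => (F z - if m ≤ z then (1 : ℝ) else 0) ^ 2 with hg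
  -- measurability of g
  have hFmeas : Measurable F := hF.measurable
  have hgmeas : Measurable g := by
    apply Measurable.pow _ measurable_const
    exact hFmeas.sub (Measurable.ite (measurableSet_Ici) measurable_const measurable_const)
  -- a.e. equality on Iic τ
  have hIio : ∀ z ∈ Iio τ, g z = (F z) ^ 2 := by
    intro z hz
    simp only [hg]
    rw [if_neg (by simp at hz; linarith)]
    ring
  have hae : (Iic τ : Set ℝ) =ᵐ[volume] (Iio τ : Set ℝ) := Iio_ae_eq_Iic.symm
  have haeeq : ∀ᵐ z ∂(volume.restrict (Iic τ)), g z = (F z) ^ 2 := by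
    rw [Measure.restrict_congr_set hae]
    filter_upwards [ae_restrict_mem measurableSet_Iio] with z hz using hIio z hz
  -- integrability of g on Iic τ
  have hg1 : IntegrableOn g (Iic τ) := by
    exact (integrable_congr haeeq).mpr hint1
  -- on Ioi m : g = (F - 1)^2
  have hg3 : IntegrableOn g (Ioi m) := by
    apply (integrable_congr ?_).mpr (hint2.mono_set Ioi_subset_Ici_self)
    filter_upwards [ae_restrict_mem measurableSet_Ioi] with z hz
    simp only [hg, if_pos (le_of_lt (mem_Ioi.mp hz))]
  -- on Ioc τ m : bounded
  have hg2 : IntegrableOn g (Ioc τ m) := by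
    have hb : ∀ z, |g z| ≤ 1 := by
      intro z
      have h0' := h0 z; have h1' := h1 z
      simp only [hg]
      rw [abs_of_nonneg (sq_nonneg _)]
      split <;> nlinarith
    apply Measure.integrableOn_of_bounded (M := 1) (by simp)
      (hgmeas.aestronglyMeasurable)
    exact Filter.Eventually.of_forall hb
  have hgIoi : IntegrableOn g (Ioi τ) := by
    have : Ioi τ = Ioc τ m ∪ Ioi m := (Ioc_union_Ioi_eq_Ioi hτm).symm
    rw [this]
    exact hg2.union hg3
  -- g on Ioi τ equals twCRPS integrand
  have htw : twCRPS F τ y = ∫ z in Ioi τ, g z := by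
    apply setIntegral_congr_fun measurableSet_Ioi
    intro z hz
    simp only [hg]
    congr 1
    have : m ≤ z ↔ y ≤ z := by
      constructor
      · intro h; exact le_trans (le_max_left y τ) h
      · intro h; exact max_le h (le_of_lt hz)
    simp [this]
  have hsplit : (∫ z in Iic τ, g z) + (∫ z in Ioi τ, g z) = ∫ z, g z :=
    intervalIntegral.integral_Iic_add_Ioi hg1 hgIoi
  have hC : CRPS F m = ∫ z, g z := rfl
  have hI : (∫ z in Iic τ, g z) = ∫ z in Iic τ, (F z) ^ 2 := integral_congr_ae haeeq
  rw [htw, hC, ← hsplit, hI]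
  ring
end

section
/- Let μ be a Borel probability measure on ℝ with cumulative distribution function F (so F(x) = μ((−∞, x])), let τ ∈ ℝ and y ∈ ℝ, and assume ∫ |x| dμ(x) < ∞. Let X and X′ be independent random variables each with law μ. Then twCRPS_τ(F, y) = E|v_τ(X) − v_τ(y)| − (1/2) E|v_τ(X) − v_τ(X′)|, where v_τ(x) = max(x, τ) is the chaining function. -/
open MeasureTheory Set ProbabilityTheory
open scoped ENNReal

lemma vol_aux (τ a b : ℝ) :
    volume {z : ℝ | τ < z ∧ ((a ≤ z ∧ z < b) ∨ (b ≤ z ∧ z < a))}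
      = ENNReal.ofReal |max a τ - max b τ| := by
  set va := max a τ with hva
  set vb := max b τ with hvb
  set m := min va vb with hm
  set M := max va vb with hM
  have hτva : τ ≤ va := le_max_right _ _
  have hτvb : τ ≤ vb := le_max_right _ _
  have hτm : τ ≤ m := le_min hτva hτvb
  have h1 : Ioo m M ⊆ {z : ℝ | τ < z ∧ ((a ≤ z ∧ z < b) ∨ (b ≤ z ∧ z < a))} := by
    intro z hz
    obtain ⟨hmz, hzM⟩ := hz
    have hτz : τ < z := lt_of_le_of_lt hτm hmz
    refine ⟨hτz, ?_⟩
    rcases le_total va vb with h | h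
    · left
      rw [hm, min_eq_left h] at hmz
      rw [hM, max_eq_right h] at hzM
      refine ⟨le_trans (le_max_left a τ) hmz.le, ?_⟩
      rcases le_or_gt b τ with h' | h'
      · rw [hvb, max_eq_right h'] at hzM; linarith
      · rwa [hvb, max_eq_left h'.le] at hzM
    · right
      rw [hm, min_eq_right h] at hmz
      rw [hM, max_eq_left h] at hzM
      refine ⟨le_trans (le_max_left b τ) hmz.le, ?_⟩
      rcases le_or_gt a τ with h' | h'
      · rw [hva, max_eq_right h'] at hzM; linarith
      · rwa [hva, max_eq_left h'.le] at hzM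
  have h2 : {z : ℝ | τ < z ∧ ((a ≤ z ∧ z < b) ∨ (b ≤ z ∧ z < a))} ⊆ Ico m M := by
    rintro z ⟨hτz, h | h⟩
    · exact ⟨le_trans (min_le_left _ _) (max_le h.1 hτz.le),
        lt_of_lt_of_le h.2 (le_trans (le_max_left b τ) (le_max_right va vb))⟩
    · exact ⟨le_trans (min_le_right _ _) (max_le h.1 hτz.le),
        lt_of_lt_of_le h.2 (le_trans (le_max_left a τ) (le_max_left va vb))⟩
  have heq : ENNReal.ofReal (M - m) = ENNReal.ofReal |va - vb| := by
    rw [hM, hm, max_sub_min_eq_abs, abs_sub_comm]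
  refine le_antisymm ?_ ?_
  · calc volume _ ≤ volume (Ico m M) := measure_mono h2
      _ = ENNReal.ofReal (M - m) := Real.volume_Ico
      _ = _ := heq
  · calc ENNReal.ofReal |va - vb| = ENNReal.ofReal (M - m) := heq.symm
      _ = volume (Ioo m M) := Real.volume_Ioo.symm
      _ ≤ _ := measure_mono h1

lemma key_swap {Ω : Type*} [MeasurableSpace Ω] (P : Measure Ω) [IsProbabilityMeasure P]
    (X Y : Ω → ℝ) (hX : Measurable X) (hY : Measurable Y) (τ : ℝ) :
    ∫⁻ ω, ENNReal.ofReal |max (X ω) τ - max (Y ω) τ| ∂P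
      = ∫⁻ z in Ioi τ, P {ω | (X ω ≤ z ∧ z < Y ω) ∨ (Y ω ≤ z ∧ z < X ω)} := by
  set E : Set (Ω × ℝ) :=
    {p | τ < p.2 ∧ ((X p.1 ≤ p.2 ∧ p.2 < Y p.1) ∨ (Y p.1 ≤ p.2 ∧ p.2 < X p.1))} with hEdef
  have hE : MeasurableSet E := by
    have h0 : MeasurableSet {p : Ω × ℝ | τ < p.2} :=
      measurable_snd measurableSet_Ioi
    have h1 : MeasurableSet {p : Ω × ℝ | X p.1 ≤ p.2} :=
      measurableSet_le (hX.comp measurable_fst) measurable_snd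
    have h2 : MeasurableSet {p : Ω × ℝ | p.2 < Y p.1} :=
      measurableSet_lt measurable_snd (hY.comp measurable_fst)
    have h3 : MeasurableSet {p : Ω × ℝ | Y p.1 ≤ p.2} :=
      measurableSet_le (hY.comp measurable_fst) measurable_snd
    have h4 : MeasurableSet {p : Ω × ℝ | p.2 < X p.1} :=
      measurableSet_lt measurable_snd (hX.comp measurable_fst)
    exact h0.inter ((h1.inter h2).union (h3.inter h4))
  have step1 : ∀ ω, ENNReal.ofReal |max (X ω) τ - max (Y ω) τ|
      = volume (Prod.mk ω ⁻¹' E) := by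
    intro ω
    rw [← vol_aux τ (X ω) (Y ω)]
    rfl
  calc ∫⁻ ω, ENNReal.ofReal |max (X ω) τ - max (Y ω) τ| ∂P
      = ∫⁻ ω, volume (Prod.mk ω ⁻¹' E) ∂P := by simp_rw [step1]
    _ = (P.prod volume) E := (Measure.prod_apply hE).symm
    _ = ∫⁻ z, P ((fun ω => (ω, z)) ⁻¹' E) ∂volume := Measure.prod_apply_symm hE
    _ = ∫⁻ z, (Ioi τ).indicator
          (fun z => P {ω | (X ω ≤ z ∧ z < Y ω) ∨ (Y ω ≤ z ∧ z < X ω)}) z ∂volume := by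
        refine lintegral_congr fun z => ?_
        by_cases hz : τ < z
        · rw [Set.indicator_apply, if_pos (mem_Ioi.mpr hz)]
          congr 1
          ext ω
          simp [hEdef, hz]
        · rw [Set.indicator_apply, if_neg (fun h => hz (mem_Ioi.mp h))]
          have : ((fun ω => (ω, z)) ⁻¹' E) = ∅ := by
            ext ω; simp [hEdef, hz]
          rw [this, measure_empty]
    _ = _ := lintegral_indicator measurableSet_Ioi _

theorem twCRPS_expectation_form
    {Ω : Type*} [MeasurableSpace Ω] (P : Measure Ω) [IsProbabilityMeasure P]
    (μ : Measure ℝ) [IsProbabilityMeasure μ]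
    (F : ℝ → ℝ) (hF : ∀ x, F x = (μ (Set.Iic x)).toReal)
    (hμint : Integrable (fun x => |x|) μ)
    (X X' : Ω → ℝ) (hX : Measurable X) (hX' : Measurable X')
    (hindep : IndepFun X X' P)
    (hlawX : P.map X = μ) (hlawX' : P.map X' = μ)
    (τ y : ℝ) :
    twCRPS F τ y =
      (∫ ω, |max (X ω) τ - max y τ| ∂P)
        - (1 / 2) * ∫ ω, |max (X ω) τ - max (X' ω) τ| ∂P := by
  -- notation
  set A : ℝ → ℝ≥0∞ := fun z => μ (Iic z) with hAdef
  set B : ℝ → ℝ≥0∞ := fun z => μ (Ioi z) with hBdef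
  have hAmeas : Measurable A :=
    Monotone.measurable (fun u v h => measure_mono (Iic_subset_Iic.mpr h))
  have hABone : ∀ z, A z + B z = 1 := by
    intro z
    have := measure_add_measure_compl (μ := μ) (measurableSet_Iic (a := z))
    rwa [compl_Iic, measure_univ] at this
  have hAne : ∀ z, A z ≠ ⊤ := fun z => measure_ne_top μ _
  have hBne : ∀ z, B z ≠ ⊤ := fun z => measure_ne_top μ _
  have hBmeas : Measurable B := by
    have : B = fun z => 1 - A z := by
      funext z
      have := hABone z
      rw [← this]
      rw [ENNReal.add_sub_cancel_left (hAne z)]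
    rw [this]
    exact measurable_const.sub hAmeas
  -- integrability of X, X'
  have hXint : Integrable X P := by
    have habs : Integrable (fun x => |x|) (P.map X) := by rwa [hlawX]
    have hid : Integrable (fun x : ℝ => x) (P.map X) :=
      habs.mono aestronglyMeasurable_id (ae_of_all _ fun x => by
        simp [abs_abs, Real.norm_eq_abs])
    exact (integrable_map_measure aestronglyMeasurable_id hX.aemeasurable).mp hid
  have hX'int : Integrable X' P := by
    have habs : Integrable (fun x => |x|) (P.map X') := by rwa [hlawX']
    have hid : Integrable (fun x : ℝ => x) (P.map X') :=
      habs.mono aestronglyMeasurable_id (ae_of_all _ fun x => by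
        simp [abs_abs, Real.norm_eq_abs])
    exact (integrable_map_measure aestronglyMeasurable_id hX'.aemeasurable).mp hid
  have hvX : Integrable (fun ω => max (X ω) τ) P := hXint.sup (integrable_const τ)
  have hvX' : Integrable (fun ω => max (X' ω) τ) P := hX'int.sup (integrable_const τ)
  have hint1 : Integrable (fun ω => |max (X ω) τ - max y τ|) P :=
    (hvX.sub (integrable_const (max y τ))).abs
  have hint2 : Integrable (fun ω => |max (X ω) τ - max (X' ω) τ|) P :=
    (hvX.sub hvX').abs
  -- key identities from key_swap
  have hkey1 : ∫⁻ ω, ENNReal.ofReal |max (X ω) τ - max y τ| ∂P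
      = ∫⁻ z in Ioi τ, (if y ≤ z then B z else A z) := by
    rw [key_swap P X (fun _ => y) hX measurable_const τ]
    refine setLIntegral_congr_fun_ae measurableSet_Ioi (ae_of_all _ fun z hz => ?_)
    by_cases hyz : y ≤ z
    · rw [if_pos hyz]
      have : {ω | (X ω ≤ z ∧ z < y) ∨ (y ≤ z ∧ z < X ω)} = X ⁻¹' (Ioi z) := by
        ext ω; simp only [mem_setOf_eq, mem_preimage, mem_Ioi]
        constructor
        · rintro (⟨_, h⟩ | ⟨_, h⟩) <;> [linarith; exact h]
        · intro h; exact Or.inr ⟨hyz, h⟩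
      rw [this]
      show P (X ⁻¹' Ioi z) = μ (Ioi z)
      rw [← hlawX, Measure.map_apply hX measurableSet_Ioi]
    · rw [if_neg hyz]
      push_neg at hyz
      have : {ω | (X ω ≤ z ∧ z < y) ∨ (y ≤ z ∧ z < X ω)} = X ⁻¹' (Iic z) := by
        ext ω; simp only [mem_setOf_eq, mem_preimage, mem_Iic]
        constructor
        · rintro (⟨h, _⟩ | ⟨h, _⟩) <;> [exact h; linarith]
        · intro h; exact Or.inl ⟨h, hyz⟩
      rw [this]
      show P (X ⁻¹' Iic z) = μ (Iic z)
      rw [← hlawX, Measure.map_apply hX measurableSet_Iic]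
  have hkey2 : ∫⁻ ω, ENNReal.ofReal |max (X ω) τ - max (X' ω) τ| ∂P
      = ∫⁻ z in Ioi τ, 2 * (A z * B z) := by
    rw [key_swap P X X' hX hX' τ]
    refine setLIntegral_congr_fun_ae measurableSet_Ioi (ae_of_all _ fun z hz => ?_)
    have hsets : {ω | (X ω ≤ z ∧ z < X' ω) ∨ (X' ω ≤ z ∧ z < X ω)}
        = (X ⁻¹' Iic z ∩ X' ⁻¹' Ioi z) ∪ (X' ⁻¹' Iic z ∩ X ⁻¹' Ioi z) := by
      ext ω
      simp only [mem_setOf_eq, mem_union, mem_inter_iff, mem_preimage, mem_Iic, mem_Ioi]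
    rw [hsets]
    have hdisj : Disjoint (X ⁻¹' Iic z ∩ X' ⁻¹' Ioi z) (X' ⁻¹' Iic z ∩ X ⁻¹' Ioi z) := by
      rw [Set.disjoint_left]
      rintro ω ⟨h1, h2⟩ ⟨h3, h4⟩
      simp only [mem_preimage, mem_Iic, mem_Ioi] at h1 h2 h3 h4
      linarith
    rw [measure_union hdisj ((hX'.comp measurable_id) measurableSet_Iic |>.inter
      (hX measurableSet_Ioi))]
    rw [hindep.measure_inter_preimage_eq_mul _ _ measurableSet_Iic measurableSet_Ioi,
      hindep.symm.measure_inter_preimage_eq_mul _ _ measurableSet_Iic measurableSet_Ioi]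
    have e1 : P (X ⁻¹' Iic z) = μ (Iic z) := by
      rw [← hlawX, Measure.map_apply hX measurableSet_Iic]
    have e2 : P (X' ⁻¹' Ioi z) = μ (Ioi z) := by
      rw [← hlawX', Measure.map_apply hX' measurableSet_Ioi]
    have e3 : P (X' ⁻¹' Iic z) = μ (Iic z) := by
      rw [← hlawX', Measure.map_apply hX' measurableSet_Iic]
    have e4 : P (X ⁻¹' Ioi z) = μ (Ioi z) := by
      rw [← hlawX, Measure.map_apply hX measurableSet_Ioi]
    rw [e1, e2, e3, e4]
    show μ (Iic z) * μ (Ioi z) + μ (Iic z) * μ (Ioi z)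
      = 2 * (μ (Iic z) * μ (Ioi z))
    ring
  -- finiteness of the two set lintegrals
  have hI1lt : (∫⁻ z in Ioi τ, (if y ≤ z then B z else A z)) < ⊤ := by
    rw [← hkey1]
    exact (hasFiniteIntegral_iff_ofReal (ae_of_all _ fun ω => abs_nonneg _)).mp
      hint1.hasFiniteIntegral
  have h2I2 : (∫⁻ z in Ioi τ, 2 * (A z * B z)) = 2 * ∫⁻ z in Ioi τ, A z * B z :=
    lintegral_const_mul 2 (hAmeas.mul hBmeas)
  have hI2lt : (∫⁻ z in Ioi τ, A z * B z) < ⊤ := by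
    have h' : (∫⁻ z in Ioi τ, 2 * (A z * B z)) < ⊤ := by
      rw [← hkey2]
      exact (hasFiniteIntegral_iff_ofReal (ae_of_all _ fun ω => abs_nonneg _)).mp
        hint2.hasFiniteIntegral
    rw [h2I2] at h'
    refine lt_of_le_of_lt ?_ h'
    nth_rewrite 1 [← one_mul (∫⁻ z in Ioi τ, A z * B z)]
    exact mul_le_mul_left (by norm_num) _
  -- real-valued integrands
  set r : ℝ → ℝ := fun z => (if y ≤ z then B z else A z).toReal with hrdef
  set s : ℝ → ℝ := fun z => (A z * B z).toReal with hsdef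
  have hrmeas : Measurable r := by
    refine Measurable.ennreal_toReal (Measurable.ite ?_ hBmeas hAmeas)
    show MeasurableSet {z : ℝ | y ≤ z}
    exact measurableSet_Ici
  have hsmeas : Measurable s := (hAmeas.mul hBmeas).ennreal_toReal
  have hofr : ∀ z, ENNReal.ofReal (r z) = (if y ≤ z then B z else A z) := by
    intro z
    by_cases h : y ≤ z <;>
      simp [hrdef, h, ENNReal.ofReal_toReal, hBne z, hAne z]
  have hofs : ∀ z, ENNReal.ofReal (s z) = A z * B z := fun z =>
    ENNReal.ofReal_toReal (ENNReal.mul_ne_top (hAne z) (hBne z))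
  have hrint : Integrable r (volume.restrict (Ioi τ)) := by
    refine ⟨hrmeas.aestronglyMeasurable, ?_⟩
    rw [hasFiniteIntegral_iff_ofReal (ae_of_all _ fun z => ENNReal.toReal_nonneg)]
    calc ∫⁻ z in Ioi τ, ENNReal.ofReal (r z)
        = ∫⁻ z in Ioi τ, (if y ≤ z then B z else A z) := lintegral_congr hofr
      _ < ⊤ := hI1lt
  have hsint : Integrable s (volume.restrict (Ioi τ)) := by
    refine ⟨hsmeas.aestronglyMeasurable, ?_⟩
    rw [hasFiniteIntegral_iff_ofReal (ae_of_all _ fun z => ENNReal.toReal_nonneg)]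
    calc ∫⁻ z in Ioi τ, ENNReal.ofReal (s z)
        = ∫⁻ z in Ioi τ, A z * B z := lintegral_congr hofs
      _ < ⊤ := hI2lt
  -- integral identities
  have hr_int_eq : ∫ z in Ioi τ, r z = ∫ ω, |max (X ω) τ - max y τ| ∂P := by
    rw [integral_eq_lintegral_of_nonneg_ae (ae_of_all _ fun z => ENNReal.toReal_nonneg)
      hrmeas.aestronglyMeasurable,
      integral_eq_lintegral_of_nonneg_ae (ae_of_all _ fun ω => abs_nonneg _)
      hint1.aestronglyMeasurable]
    congr 1
    rw [hkey1]
    exact lintegral_congr hofr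
  have hs_int_eq : ∫ z in Ioi τ, s z
      = (1 / 2) * ∫ ω, |max (X ω) τ - max (X' ω) τ| ∂P := by
    rw [integral_eq_lintegral_of_nonneg_ae (ae_of_all _ fun z => ENNReal.toReal_nonneg)
      hsmeas.aestronglyMeasurable,
      integral_eq_lintegral_of_nonneg_ae (ae_of_all _ fun ω => abs_nonneg _)
      hint2.aestronglyMeasurable]
    rw [hkey2, h2I2]
    rw [show ∫⁻ z in Ioi τ, ENNReal.ofReal (s z) = ∫⁻ z in Ioi τ, A z * B z from
      lintegral_congr hofs]
    rw [ENNReal.toReal_mul]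
    simp only [ENNReal.toReal_ofNat]
    ring
  -- pointwise identity
  have hpt : ∀ z ∈ Ioi τ, (F z - if y ≤ z then (1 : ℝ) else 0) ^ 2 = r z - s z := by
    intro z hz
    have habr : (A z).toReal + (B z).toReal = 1 := by
      rw [← ENNReal.toReal_add (hAne z) (hBne z), hABone z, ENNReal.toReal_one]
    have hs' : s z = (A z).toReal * (B z).toReal := by
      simp [hsdef, ENNReal.toReal_mul]
    rw [hF z]
    have hFz : (μ (Iic z)).toReal = (A z).toReal := rfl
    rw [hFz]
    have hb : (B z).toReal = 1 - (A z).toReal := by linarith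
    by_cases h : y ≤ z
    · have hr' : r z = (B z).toReal := by simp [hrdef, h]
      rw [if_pos h, hr', hs', hb]
      ring
    · have hr' : r z = (A z).toReal := by simp [hrdef, h]
      rw [if_neg h, hr', hs', hb]
      ring
  -- conclusion
  have hμA : ∀ z, F z = (A z).toReal := fun z => hF z
  calc twCRPS F τ y
      = ∫ z in Ioi τ, (r z - s z) := by
        rw [twCRPS]
        exact setIntegral_congr_fun measurableSet_Ioi (fun z hz => hpt z hz)
    _ = (∫ z in Ioi τ, r z) - ∫ z in Ioi τ, s z := integral_sub hrint hsint
    _ = _ := by rw [hr_int_eq, hs_int_eq]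
end

section
/- Let Φ and φ denote the standard normal cumulative distribution function Φ(x) = ∫_{-∞}^{x} (1/√(2π)) e^{−u²/2} du and density φ(x) = (1/√(2π)) e^{−x²/2}. Then for every threshold τ ∈ ℝ and observation y ∈ ℝ, writing v = max(y, τ): twCRPS_τ(Φ, y) = −τ Φ(τ)² + v (2Φ(v) − 1) + 2 (φ(v) − φ(τ) Φ(τ)) − (1/√π) (1 − Φ(√2 · τ)). -/
open MeasureTheory Set
open Filter Topology

/-- Standard normal density `φ(x) = (1/√(2π)) e^{−x²/2}`. -/
noncomputable def stdNormalPDF (x : ℝ) : ℝ :=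
  (Real.sqrt (2 * Real.pi))⁻¹ * Real.exp (-x ^ 2 / 2)

/-- Standard normal CDF `Φ(x) = ∫_{-∞}^x φ(u) du`. -/
noncomputable def stdNormalCDF (x : ℝ) : ℝ :=
  ∫ u in Set.Iic x, stdNormalPDF u

lemma pdf_nonneg (x : ℝ) : 0 ≤ stdNormalPDF x := by
  unfold stdNormalPDF; positivity

lemma pdf_eq : stdNormalPDF = fun x => (Real.sqrt (2 * Real.pi))⁻¹ * Real.exp (-(1/2) * x ^ 2) := by
  funext x; unfold stdNormalPDF; ring_nf

lemma integrable_pdf : Integrable stdNormalPDF := by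
  rw [pdf_eq]
  exact (integrable_exp_neg_mul_sq (by norm_num)).const_mul _

lemma integral_pdf : ∫ x, stdNormalPDF x = 1 := by
  rw [pdf_eq, MeasureTheory.integral_const_mul, integral_gaussian]
  have h2 : Real.pi / (1/2) = 2 * Real.pi := by ring
  rw [h2, inv_mul_cancel₀]
  positivity

lemma hasDerivAt_pdf (x : ℝ) : HasDerivAt stdNormalPDF (-x * stdNormalPDF x) x := by
  have h1 : HasDerivAt (fun x : ℝ => -x ^ 2 / 2) (-x) x := by
    have := ((hasDerivAt_pow 2 x).neg).div_const 2
    refine this.congr_deriv (Eq.symm ?_); push_cast; ring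
  have h2 := (Real.hasDerivAt_exp (-x ^ 2 / 2)).comp x h1
  have := h2.const_mul (Real.sqrt (2 * Real.pi))⁻¹
  refine this.congr_deriv (Eq.symm ?_)
  · simp [stdNormalPDF]; ring

lemma continuous_pdf : Continuous stdNormalPDF := by
  have : ∀ x, HasDerivAt stdNormalPDF (-x * stdNormalPDF x) x := hasDerivAt_pdf
  exact continuous_iff_continuousAt.2 fun x => (this x).continuousAt

lemma hasDerivAt_cdf (x : ℝ) : HasDerivAt stdNormalCDF (stdNormalPDF x) x := by
  have key : stdNormalCDF = fun t => stdNormalCDF 0 + ∫ u in (0:ℝ)..t, stdNormalPDF u := by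
    funext t
    rw [intervalIntegral.integral_Iic_sub_Iic (integrable_pdf.integrableOn)
      (integrable_pdf.integrableOn) |>.symm]
    unfold stdNormalCDF; ring
  rw [key]
  have hd : HasDerivAt (fun t => ∫ u in (0:ℝ)..t, stdNormalPDF u) (stdNormalPDF x) x :=
    intervalIntegral.integral_hasDerivAt_right integrable_pdf.intervalIntegrable
      continuous_pdf.stronglyMeasurable.stronglyMeasurableAtFilter
      continuous_pdf.continuousAt
  exact ((hasDerivAt_const x (stdNormalCDF 0)).add hd).congr_deriv (zero_add _)

lemma continuous_cdf : Continuous stdNormalCDF :=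
  continuous_iff_continuousAt.2 fun x => (hasDerivAt_cdf x).continuousAt

lemma cdf_Ioi (y : ℝ) : ∫ x in Ioi y, stdNormalPDF x = 1 - stdNormalCDF y := by
  have := MeasureTheory.integral_add_compl (measurableSet_Iic (a := y)) integrable_pdf
  rw [compl_Iic] at this
  have h : stdNormalCDF y + ∫ x in Ioi y, stdNormalPDF x = 1 := by
    rw [← integral_pdf] at *; exact this
  linarith

lemma cdf_le_one (y : ℝ) : stdNormalCDF y ≤ 1 := by
  have h := cdf_Ioi y
  have : 0 ≤ ∫ x in Ioi y, stdNormalPDF x :=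
    setIntegral_nonneg measurableSet_Ioi fun x _ => pdf_nonneg x
  linarith

lemma cdf_nonneg (y : ℝ) : 0 ≤ stdNormalCDF y :=
  setIntegral_nonneg measurableSet_Iic fun x _ => pdf_nonneg x

lemma tendsto_pdf : Tendsto stdNormalPDF atTop (𝓝 0) := by
  have h1 : Tendsto (fun x : ℝ => -x ^ 2 / 2) atTop atBot := by
    apply Filter.Tendsto.atBot_div_const (by norm_num)
    exact tendsto_neg_atBot_iff.2 (tendsto_pow_atTop (by norm_num))
  have h2 := Real.tendsto_exp_atBot.comp h1
  have h3 := h2.const_mul (Real.sqrt (2 * Real.pi))⁻¹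
  unfold stdNormalPDF
  simpa only [Function.comp_def, mul_zero] using h3
lemma integral_Ioi_id_mul_pdf (x : ℝ) (hx : 0 ≤ x) :
    ∫ u in Ioi x, u * stdNormalPDF u = stdNormalPDF x := by
  have hd : ∀ u ∈ Ici x, HasDerivAt (fun u => -stdNormalPDF u) (u * stdNormalPDF u) u := by
    intro u _
    have := (hasDerivAt_pdf u).neg
    refine this.congr_deriv (Eq.symm ?_); ring
  have hpos : ∀ u ∈ Ioi x, 0 ≤ u * stdNormalPDF u := fun u hu =>
    mul_nonneg (le_trans hx (le_of_lt hu)) (pdf_nonneg u)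
  have hlim : Tendsto (fun u => -stdNormalPDF u) atTop (𝓝 (-0)) := tendsto_pdf.neg
  rw [neg_zero] at hlim
  have := integral_Ioi_of_hasDerivAt_of_nonneg' hd hpos hlim
  simpa using this

lemma integrableOn_id_mul_pdf (x : ℝ) (hx : 0 ≤ x) :
    IntegrableOn (fun u => u * stdNormalPDF u) (Ioi x) := by
  have hd : ∀ u ∈ Ici x, HasDerivAt (fun u => -stdNormalPDF u) (u * stdNormalPDF u) u := by
    intro u _
    have := (hasDerivAt_pdf u).neg
    refine this.congr_deriv (Eq.symm ?_); ring
  have hpos : ∀ u ∈ Ioi x, 0 ≤ u * stdNormalPDF u := fun u hu =>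
    mul_nonneg (le_trans hx (le_of_lt hu)) (pdf_nonneg u)
  have hlim : Tendsto (fun u => -stdNormalPDF u) atTop (𝓝 (-0)) := tendsto_pdf.neg
  rw [neg_zero] at hlim
  exact integrableOn_Ioi_deriv_of_nonneg' hd hpos hlim

lemma tail_le_pdf (x : ℝ) (hx : 1 ≤ x) : 1 - stdNormalCDF x ≤ stdNormalPDF x := by
  rw [← cdf_Ioi, ← integral_Ioi_id_mul_pdf x (by linarith)]
  apply setIntegral_mono_on integrable_pdf.integrableOn
    (integrableOn_id_mul_pdf x (by linarith)) measurableSet_Ioi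
  intro u hu
  have h1 : (1:ℝ) ≤ u := le_trans hx (le_of_lt hu)
  nlinarith [pdf_nonneg u]

lemma tendsto_cdf : Tendsto stdNormalCDF atTop (𝓝 1) := by
  have h : Tendsto (fun x => 1 - stdNormalCDF x) atTop (𝓝 0) := by
    apply squeeze_zero' (eventually_atTop.2 ⟨1, fun x _ => by linarith [cdf_le_one x]⟩)
      (eventually_atTop.2 ⟨1, fun x hx => tail_le_pdf x hx⟩) tendsto_pdf
  have := h.const_sub 1
  simpa using this

lemma tendsto_mul_pdf_sq : Tendsto (fun x : ℝ => x * stdNormalPDF x ^ 2) atTop (𝓝 0) := by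
  have base : Tendsto (fun x : ℝ => x * Real.exp (-x)) atTop (𝓝 0) := by
    simpa using Real.tendsto_pow_mul_exp_neg_atTop_nhds_zero 1
  have hb := base.const_mul (((Real.sqrt (2 * Real.pi))⁻¹) ^ 2)
  rw [mul_zero] at hb
  apply squeeze_zero' (eventually_atTop.2 ⟨0, fun x hx => by positivity⟩) ?_ hb
  refine eventually_atTop.2 ⟨1, fun x hx => ?_⟩
  unfold stdNormalPDF
  have h1 : Real.exp (-x ^ 2 / 2) ^ 2 = Real.exp (-x ^ 2) := by
    rw [sq, ← Real.exp_add]; congr 1; ring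
  have h2 : Real.exp (-x ^ 2) ≤ Real.exp (-x) := Real.exp_le_exp.2 (by nlinarith)
  have h3 : x * ((Real.sqrt (2 * Real.pi))⁻¹ * Real.exp (-x ^ 2 / 2)) ^ 2
      = ((Real.sqrt (2 * Real.pi))⁻¹) ^ 2 * (x * Real.exp (-x ^ 2 / 2) ^ 2) := by ring
  rw [h3, h1]
  apply mul_le_mul_of_nonneg_left _ (by positivity)
  exact mul_le_mul_of_nonneg_left h2 (by linarith)

lemma tendsto_x_tail_sq :
    Tendsto (fun x => x * (1 - stdNormalCDF x) ^ 2) atTop (𝓝 0) := by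
  apply squeeze_zero'
    (eventually_atTop.2 ⟨1, fun x hx => mul_nonneg (by linarith) (sq_nonneg _)⟩)
    ?_ tendsto_mul_pdf_sq
  refine eventually_atTop.2 ⟨1, fun x hx => ?_⟩
  have h1 := tail_le_pdf x hx
  have h2 : 0 ≤ 1 - stdNormalCDF x := by linarith [cdf_le_one x]
  have h3 : (1 - stdNormalCDF x) ^ 2 ≤ stdNormalPDF x ^ 2 := by nlinarith
  exact mul_le_mul_of_nonneg_left h3 (by linarith)
lemma key_const (x : ℝ) :
    (Real.sqrt Real.pi)⁻¹ * (Real.sqrt 2 * stdNormalPDF (Real.sqrt 2 * x))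
      = 2 * stdNormalPDF x ^ 2 := by
  unfold stdNormalPDF
  have hs2 : Real.sqrt 2 ^ 2 = 2 := Real.sq_sqrt (by norm_num)
  have hsp : Real.sqrt Real.pi ^ 2 = Real.pi := Real.sq_sqrt Real.pi_pos.le
  have h2pi : Real.sqrt (2 * Real.pi) = Real.sqrt 2 * Real.sqrt Real.pi :=
    Real.sqrt_mul (by norm_num) _
  have hE1 : Real.exp (-(Real.sqrt 2 * x) ^ 2 / 2) = Real.exp (-x ^ 2 / 2) ^ 2 := by
    rw [sq (Real.exp _), ← Real.exp_add]; congr 1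
    rw [mul_pow, hs2]; ring
  rw [h2pi, hE1]
  have h2 : (0:ℝ) < Real.sqrt 2 := by positivity
  have hp : (0:ℝ) < Real.sqrt Real.pi := Real.sqrt_pos.2 Real.pi_pos
  have hE : (0:ℝ) < Real.exp (-x ^ 2 / 2) := Real.exp_pos _
  field_simp
  linear_combination hs2

lemma hasDerivAt_cdf_sqrt2 (x : ℝ) :
    HasDerivAt (fun x => stdNormalCDF (Real.sqrt 2 * x))
      (Real.sqrt 2 * stdNormalPDF (Real.sqrt 2 * x)) x := by
  have hin : HasDerivAt (fun x : ℝ => Real.sqrt 2 * x) (Real.sqrt 2) x := by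
    simpa using (hasDerivAt_id x).const_mul (Real.sqrt 2)
  have h := (hasDerivAt_cdf (Real.sqrt 2 * x)).comp x hin
  refine h.congr_deriv (Eq.symm ?_)
  ring

noncomputable def Gaux (z : ℝ) : ℝ :=
  z * stdNormalCDF z ^ 2 + 2 * stdNormalPDF z * stdNormalCDF z
    - (Real.sqrt Real.pi)⁻¹ * stdNormalCDF (Real.sqrt 2 * z)

noncomputable def Haux (z : ℝ) : ℝ :=
  Gaux z + z - 2 * (z * stdNormalCDF z + stdNormalPDF z)

lemma hasDerivAt_G (z : ℝ) : HasDerivAt Gaux (stdNormalCDF z ^ 2) z := by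
  have hΦ := hasDerivAt_cdf z
  have hφ := hasDerivAt_pdf z
  have h1 := (hasDerivAt_id z).mul (hΦ.pow 2)
  have h2 := (hφ.const_mul 2).mul hΦ
  have h3 := (hasDerivAt_cdf_sqrt2 z).const_mul (Real.sqrt Real.pi)⁻¹
  have h := (h1.add h2).sub h3
  refine h.congr_deriv (Eq.symm ?_)
  simp only [id_eq, Pi.pow_apply]
  push_cast
  linear_combination key_const z

lemma hasDerivAt_H (z : ℝ) : HasDerivAt Haux ((1 - stdNormalCDF z) ^ 2) z := by
  have h1 := hasDerivAt_G z
  have h2 := ((hasDerivAt_id z).mul (hasDerivAt_cdf z)).add (hasDerivAt_pdf z)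
  have h := (h1.add (hasDerivAt_id z)).sub (h2.const_mul 2)
  refine h.congr_deriv (Eq.symm ?_)
  simp only [id_eq]
  ring

lemma tendsto_H : Tendsto Haux atTop (𝓝 (-(Real.sqrt Real.pi)⁻¹)) := by
  have hrw : Haux = fun z => z * (1 - stdNormalCDF z) ^ 2
      + 2 * stdNormalPDF z * (stdNormalCDF z - 1)
      - (Real.sqrt Real.pi)⁻¹ * stdNormalCDF (Real.sqrt 2 * z) := by
    funext z; unfold Haux Gaux; ring
  rw [hrw]
  have h1 := tendsto_x_tail_sq
  have h2 : Tendsto (fun z => 2 * stdNormalPDF z * (stdNormalCDF z - 1)) atTop (𝓝 0) := by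
    have := (tendsto_pdf.const_mul 2).mul (tendsto_cdf.sub_const 1)
    simpa using this
  have h3 : Tendsto (fun z => stdNormalCDF (Real.sqrt 2 * z)) atTop (𝓝 1) := by
    apply tendsto_cdf.comp
    exact Tendsto.const_mul_atTop (by positivity) tendsto_id
  have := (h1.add h2).sub (h3.const_mul (Real.sqrt Real.pi)⁻¹)
  simpa using this

theorem twCRPS_stdNormal (τ y : ℝ) :
    twCRPS stdNormalCDF τ y =
      -τ * (stdNormalCDF τ) ^ 2
        + max y τ * (2 * stdNormalCDF (max y τ) - 1)
        + 2 * (stdNormalPDF (max y τ) - stdNormalPDF τ * stdNormalCDF τ)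
        - (Real.sqrt Real.pi)⁻¹ * (1 - stdNormalCDF (Real.sqrt 2 * τ)) := by
  set v := max y τ with hv
  have hτv : τ ≤ v := le_max_right y τ
  have hyv : y ≤ v := le_max_left y τ
  set f : ℝ → ℝ := fun z => (stdNormalCDF z - if y ≤ z then (1 : ℝ) else 0) ^ 2 with hf
  have hmeas : Measurable f := by
    apply Measurable.pow_const
    exact continuous_cdf.measurable.sub
      (Measurable.ite (measurableSet_le measurable_const measurable_id)
        measurable_const measurable_const)
  have hbound : ∀ z, ‖f z‖ ≤ 1 := by
    intro z
    have h1 := cdf_nonneg z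
    have h2 := cdf_le_one z
    rw [Real.norm_eq_abs, abs_le]
    simp only [hf]
    by_cases hyz : y ≤ z <;> simp only [if_pos, if_neg, hyz, if_true, if_false] <;>
      constructor <;> nlinarith
  have hint1 : IntegrableOn f (Ioc τ v) := by
    apply Measure.integrableOn_of_bounded measure_Ioc_lt_top.ne hmeas.aestronglyMeasurable
    exact ae_of_all _ hbound
  have hHderiv : ∀ z ∈ Ici v, HasDerivAt Haux ((1 - stdNormalCDF z) ^ 2) z :=
    fun z _ => hasDerivAt_H z
  have hintH : IntegrableOn (fun z => (1 - stdNormalCDF z) ^ 2) (Ioi v) :=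
    integrableOn_Ioi_deriv_of_nonneg' hHderiv (fun z _ => sq_nonneg _) tendsto_H
  have hfeq2 : EqOn (fun z => (1 - stdNormalCDF z) ^ 2) f (Ioi v) := by
    intro z hz
    have hyz : y ≤ z := le_trans hyv (le_of_lt hz)
    simp only [hf, if_pos hyz]
    ring
  have hint2 : IntegrableOn f (Ioi v) :=
    hintH.congr_fun hfeq2 measurableSet_Ioi
  have hsplit : twCRPS stdNormalCDF τ y = (∫ z in Ioc τ v, f z) + ∫ z in Ioi v, f z := by
    have h0 : twCRPS stdNormalCDF τ y = ∫ z in Set.Ioi τ, f z := rfl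
    rw [h0, ← Set.Ioc_union_Ioi_eq_Ioi hτv,
      setIntegral_union (Set.Ioc_disjoint_Ioi le_rfl) measurableSet_Ioi hint1 hint2]
  have hI1 : ∫ z in Ioc τ v, f z = Gaux v - Gaux τ := by
    have heq : ∫ z in Ioc τ v, f z = ∫ z in Ioc τ v, stdNormalCDF z ^ 2 := by
      rw [MeasureTheory.integral_Ioc_eq_integral_Ioo, MeasureTheory.integral_Ioc_eq_integral_Ioo]
      apply setIntegral_congr_fun measurableSet_Ioo
      intro z hz
      have h1 : ¬ y ≤ z := by
        intro hyz
        exact absurd hz.2 (not_lt.2 (max_le hyz (le_of_lt hz.1)))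
      simp [hf, if_neg h1]
    rw [heq, ← intervalIntegral.integral_of_le hτv]
    exact intervalIntegral.integral_eq_sub_of_hasDerivAt (fun x _ => hasDerivAt_G x)
      ((continuous_cdf.pow 2).intervalIntegrable _ _)
  have hI2 : ∫ z in Ioi v, f z = -(Real.sqrt Real.pi)⁻¹ - Haux v := by
    rw [← setIntegral_congr_fun measurableSet_Ioi hfeq2]
    exact integral_Ioi_of_hasDerivAt_of_nonneg' hHderiv (fun z _ => sq_nonneg _) tendsto_H
  rw [hsplit, hI1, hI2]
  unfold Haux Gaux
  ring
end

section
/- Let F be the standard logistic cumulative distribution function, F(x) = 1/(1 + e^{−x}). Then for every threshold τ ∈ ℝ and observation y ∈ ℝ, writing v = max(y, τ): twCRPS_τ(F, y) = F(τ) − 1 + log((1 − F(τ))/(1 − F(v))) − log F(v). -/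
open MeasureTheory Set

/-- Standard logistic CDF `F(x) = 1/(1 + e^{−x})`. -/
noncomputable def logisticCDF (x : ℝ) : ℝ := 1 / (1 + Real.exp (-x))

section Aux
open Filter

private lemma lg_hpos (z : ℝ) : 0 < 1 + Real.exp (-z) := by positivity
private lemma lg_hpos' (z : ℝ) : 0 < 1 + Real.exp z := by positivity

private lemma lg_hasDerivAt (z : ℝ) :
    HasDerivAt logisticCDF (Real.exp (-z) / (1 + Real.exp (-z)) ^ 2) z := by
  have h : HasDerivAt (fun z : ℝ => 1 + Real.exp (-z)) (-Real.exp (-z)) z := by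
    simpa using ((Real.hasDerivAt_exp (-z)).comp z ((hasDerivAt_id z).neg)).const_add 1
  have h2 := h.inv (ne_of_gt (lg_hpos z))
  have he : logisticCDF = fun z : ℝ => (1 + Real.exp (-z))⁻¹ := by
    funext x; simp [logisticCDF, one_div]
  rw [he]
  refine HasDerivAt.congr_deriv h2 ?_
  field_simp

private lemma lg_g1 (z : ℝ) :
    HasDerivAt (fun z => Real.log (1 + Real.exp z) - logisticCDF z) (logisticCDF z ^ 2) z := by
  have h : HasDerivAt (fun z : ℝ => 1 + Real.exp z) (Real.exp z) z := by
    simpa using (Real.hasDerivAt_exp z).const_add 1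
  have hlog := h.log (ne_of_gt (lg_hpos' z))
  have hd := hlog.sub (lg_hasDerivAt z)
  refine HasDerivAt.congr_deriv hd ?_
  have key : Real.exp z * Real.exp (-z) = 1 := by rw [← Real.exp_add]; simp
  have h1 := lg_hpos z
  have h2 := lg_hpos' z
  simp only [logisticCDF]
  field_simp
  nlinarith [key, sq_nonneg (1 + Real.exp (-z))]

private lemma lg_g2 (z : ℝ) :
    HasDerivAt (fun z => -Real.log (1 + Real.exp (-z)) - logisticCDF z)
      ((logisticCDF z - 1) ^ 2) z := by
  have h : HasDerivAt (fun z : ℝ => 1 + Real.exp (-z)) (-Real.exp (-z)) z := by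
    simpa using ((Real.hasDerivAt_exp (-z)).comp z ((hasDerivAt_id z).neg)).const_add 1
  have hlog := (h.log (ne_of_gt (lg_hpos z))).neg
  have hd := hlog.sub (lg_hasDerivAt z)
  refine HasDerivAt.congr_deriv hd ?_
  have h1 := lg_hpos z
  simp only [logisticCDF]
  field_simp
  ring

private lemma lg_cont : Continuous logisticCDF := by
  apply Continuous.div continuous_const
  · exact continuous_const.add (Real.continuous_exp.comp continuous_neg)
  · intro x; exact ne_of_gt (lg_hpos x)

private lemma lg_tendsto_g2 :
    Tendsto (fun z => -Real.log (1 + Real.exp (-z)) - logisticCDF z) atTop (nhds (-1)) := by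
  have he : Tendsto (fun z : ℝ => Real.exp (-z)) atTop (nhds 0) :=
    Real.tendsto_exp_atBot.comp tendsto_neg_atTop_atBot
  have h1 : Tendsto (fun z : ℝ => 1 + Real.exp (-z)) atTop (nhds 1) := by
    simpa using he.const_add 1
  have hlog : Tendsto (fun z : ℝ => Real.log (1 + Real.exp (-z))) atTop (nhds 0) := by
    have := (Real.continuousAt_log (by norm_num : (1:ℝ) ≠ 0)).tendsto.comp h1
    simpa [Function.comp_def] using this
  have hF : Tendsto logisticCDF atTop (nhds 1) := by
    have he : logisticCDF = fun z : ℝ => (1 + Real.exp (-z))⁻¹ := by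
      funext x; simp [logisticCDF, one_div]
    rw [he]
    simpa using h1.inv₀ (by norm_num)
  have := (hlog.neg).sub hF
  simpa using this

end Aux

theorem twCRPS_logistic (τ y : ℝ) :
    twCRPS logisticCDF τ y =
      logisticCDF τ - 1
        + Real.log ((1 - logisticCDF τ) / (1 - logisticCDF (max y τ)))
        - Real.log (logisticCDF (max y τ)) := by
  set v := max y τ with hv
  have hτv : τ ≤ v := le_max_right _ _
  have hyv : y ≤ v := le_max_left _ _
  set f : ℝ → ℝ := fun z => (logisticCDF z - if y ≤ z then (1 : ℝ) else 0) ^ 2 with hf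
  -- tail integral over Ioi v
  have htail_int : IntegrableOn (fun z => (logisticCDF z - 1) ^ 2) (Set.Ioi v) :=
    integrableOn_Ioi_deriv_of_nonneg' (fun x _ => lg_g2 x) (fun x _ => sq_nonneg _) lg_tendsto_g2
  have htail : (∫ z in Set.Ioi v, (logisticCDF z - 1) ^ 2) =
      -1 - (-Real.log (1 + Real.exp (-v)) - logisticCDF v) :=
    integral_Ioi_of_hasDerivAt_of_nonneg' (fun x _ => lg_g2 x) (fun x _ => sq_nonneg _)
      lg_tendsto_g2
  have hfe : Set.EqOn f (fun z => (logisticCDF z - 1) ^ 2) (Set.Ioi v) := by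
    intro z hz
    simp only [hf]
    rw [if_pos (hyv.trans (le_of_lt hz))]
  have htail_int' : IntegrableOn f (Set.Ioi v) :=
    htail_int.congr_fun (fun z hz => (hfe hz).symm) measurableSet_Ioi
  have htail' : (∫ z in Set.Ioi v, f z) = -1 + Real.log (1 + Real.exp (-v)) + logisticCDF v := by
    rw [setIntegral_congr_fun measurableSet_Ioi hfe, htail]; ring
  -- middle integral over Ioc τ v
  have hmid_sq_int : IntegrableOn (fun z => logisticCDF z ^ 2) (Set.Ioc τ v) :=
    (((lg_cont.pow 2).continuousOn.integrableOn_compact isCompact_Icc).mono_set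
      Set.Ioc_subset_Icc_self)
  have hae : f =ᵐ[volume.restrict (Set.Ioc τ v)] fun z => logisticCDF z ^ 2 := by
    have h0 : ∀ᵐ z : ℝ ∂volume, z ∉ ({v} : Set ℝ) :=
      measure_eq_zero_iff_ae_notMem.mp Real.volume_singleton
    filter_upwards [ae_restrict_mem measurableSet_Ioc, ae_restrict_of_ae h0] with z hz hne
    have hzv : z < v := lt_of_le_of_ne hz.2 (by simpa using hne)
    have hzy : z < y := by
      by_contra h
      push_neg at h
      have : v ≤ z := max_le h (le_of_lt hz.1)
      linarith
    simp [hf, not_le.mpr hzy]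
  have hmid_int : IntegrableOn f (Set.Ioc τ v) := hmid_sq_int.congr hae.symm
  have hmid : (∫ z in Set.Ioc τ v, f z) =
      (Real.log (1 + Real.exp v) - logisticCDF v)
        - (Real.log (1 + Real.exp τ) - logisticCDF τ) := by
    rw [integral_congr_ae hae, ← intervalIntegral.integral_of_le hτv]
    exact intervalIntegral.integral_eq_sub_of_hasDerivAt (fun x _ => lg_g1 x)
      ((lg_cont.pow 2).intervalIntegrable _ _)
  -- split
  have hsplit : (∫ z in Set.Ioi τ, f z) =
      (∫ z in Set.Ioc τ v, f z) + ∫ z in Set.Ioi v, f z := by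
    rw [← setIntegral_union (Set.Ioc_disjoint_Ioi le_rfl) measurableSet_Ioi hmid_int htail_int',
      Set.Ioc_union_Ioi_eq_Ioi hτv]
  -- algebraic finish
  have h1F : ∀ z : ℝ, 1 - logisticCDF z = Real.exp (-z) / (1 + Real.exp (-z)) := by
    intro z
    have := lg_hpos z
    simp only [logisticCDF]
    field_simp
    ring
  have hratio : (1 - logisticCDF τ) / (1 - logisticCDF v)
      = (1 + Real.exp v) / (1 + Real.exp τ) := by
    rw [h1F, h1F, Real.exp_neg, Real.exp_neg]
    have t1 := Real.exp_pos τ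
    have t2 := Real.exp_pos v
    field_simp
    ring
  have hlogF : Real.log (logisticCDF v) = -Real.log (1 + Real.exp (-v)) := by
    simp only [logisticCDF, one_div, Real.log_inv]
  have hlogr : Real.log ((1 + Real.exp v) / (1 + Real.exp τ))
      = Real.log (1 + Real.exp v) - Real.log (1 + Real.exp τ) :=
    Real.log_div (ne_of_gt (lg_hpos' v)) (ne_of_gt (lg_hpos' τ))
  show (∫ z in Set.Ioi τ, f z) = _
  rw [hsplit, hmid, htail', hratio, hlogr, hlogF]
  ring
end

section
/- Let ξ ∈ ℝ with ξ ≠ 0 and ξ < 1, and let F_ξ be the cumulative distribution function of the generalized Pareto distribution with shape ξ, zero location and unit scale: F_ξ(x) = 0 for x < 0; F_ξ(x) = 1 − (1 + ξx)^{−1/ξ} for x ≥ 0 with 1 + ξx > 0; and F_ξ(x) = 1 for x ≥ −1/ξ when ξ < 0. Then for every threshold τ ≥ 0 and observation y ≥ 0 (with, when ξ < 0, also τ ≤ −1/ξ and y ≤ −1/ξ), writing v = max(y, τ): twCRPS_τ(F_ξ, y) = v − τ + (2/(1 − ξ)) ((1 − F_ξ(v))^{1−ξ} − (1 − F_ξ(τ))^{1−ξ})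 + (1/(2 − ξ)) (1 − F_ξ(τ))^{2−ξ}. -/
open MeasureTheory Set

/-- CDF of the generalized Pareto distribution with shape `ξ`, zero location and
unit scale: `0` for `x < 0`, `1 − (1 + ξx)^{−1/ξ}` for `x ≥ 0` with `1 + ξx > 0`,
and `1` otherwise (i.e. for `x ≥ −1/ξ` when `ξ < 0`). -/
noncomputable def gpdCDF (ξ : ℝ) (x : ℝ) : ℝ :=
  if x < 0 then 0
  else if 0 < 1 + ξ * x then 1 - (1 + ξ * x) ^ (-1 / ξ) else 1

open Filter Topology

lemma gpd_eq {ξ x : ℝ} (hξ0 : ξ ≠ 0) (hx : 0 ≤ x) (hx' : 0 ≤ 1 + ξ * x) :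
    gpdCDF ξ x = 1 - (1 + ξ * x) ^ (-1 / ξ) := by
  unfold gpdCDF
  rw [if_neg (not_lt.2 hx)]
  rcases lt_or_eq_of_le hx' with h | h
  · rw [if_pos h]
  · rw [if_neg (by rw [← h]; exact lt_irrefl 0), ← h,
      Real.zero_rpow (by simp [div_eq_zero_iff, hξ0]), sub_zero]

lemma gpd_nonneg {ξ x : ℝ} (hξ0 : ξ ≠ 0) : 0 ≤ gpdCDF ξ x := by
  unfold gpdCDF
  split_ifs with h1 h2
  · exact le_refl 0
  · have hx : 0 ≤ x := not_lt.1 h1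
    have : (1 + ξ * x) ^ (-1 / ξ) ≤ 1 := by
      rcases lt_or_gt_of_ne hξ0 with hneg | hpos
      · exact Real.rpow_le_one (le_of_lt h2) (by nlinarith)
          (le_of_lt (div_pos_of_neg_of_neg (by norm_num) hneg))
      · refine Real.rpow_le_one_of_one_le_of_nonpos (by nlinarith) ?_
        rw [div_nonpos_iff]
        right
        exact ⟨by norm_num, hpos.le⟩
    linarith
  · norm_num

lemma gpd_le_one {ξ x : ℝ} (hξ0 : ξ ≠ 0) : gpdCDF ξ x ≤ 1 := by
  unfold gpdCDF
  split_ifs with h1 h2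
  · norm_num
  · have : 0 ≤ (1 + ξ * x) ^ (-1 / ξ) := Real.rpow_nonneg (le_of_lt h2) _
    linarith
  · exact le_refl 1

lemma gpd_measurable (ξ : ℝ) : Measurable (gpdCDF ξ) := by
  unfold gpdCDF
  have hm : Measurable fun x : ℝ => 1 + ξ * x :=
    measurable_const.add (measurable_id.const_mul ξ)
  apply Measurable.ite (measurableSet_lt measurable_id measurable_const) measurable_const
  apply Measurable.ite (measurableSet_lt measurable_const hm)
    (measurable_const.sub (hm.pow measurable_const)) measurable_const

lemma hasDerivAt_aux {ξ k : ℝ} (hξ0 : ξ ≠ 0) (hξ1 : ξ < 1) (hk : 1 ≤ k) {z : ℝ}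
    (h : 1 + ξ * z ≠ 0 ∨ ξ < 0) :
    HasDerivAt (fun z => (1 + ξ * z) ^ ((ξ - k) / ξ) / (ξ - k))
      ((1 + ξ * z) ^ (-k / ξ)) z := by
  have h1 : HasDerivAt (fun z : ℝ => 1 + ξ * z) ξ z := by
    simpa using ((hasDerivAt_id z).const_mul ξ).const_add 1
  have hcond : (1 + ξ * z ≠ 0) ∨ 1 ≤ (ξ - k) / ξ := by
    rcases h with h | h
    · exact Or.inl h
    · right
      rw [le_div_iff_of_neg h]
      nlinarith
  have h2 := (h1.rpow_const hcond).div_const (ξ - k)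
  have hkξ : ξ - k ≠ 0 := by linarith
  have hc1 : (ξ - k) / ξ - 1 = -k / ξ := by field_simp; ring
  rw [hc1] at h2
  have e : ξ * ((ξ - k) / ξ) = ξ - k := by field_simp
  rw [e, mul_div_cancel_left₀ _ hkξ] at h2
  exact h2

lemma hcond_aux {ξ a b : ℝ} (hξ0 : ξ ≠ 0) (hab : a ≤ b) (h0 : ξ < 0 ∨ 0 < 1 + ξ * a) :
    ∀ z ∈ Set.uIcc a b, (1 + ξ * z ≠ 0 ∨ ξ < 0) := by
  intro z hz
  rcases lt_or_gt_of_ne hξ0 with h | h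
  · exact Or.inr h
  · left
    have ha : 0 < 1 + ξ * a := h0.resolve_left (not_lt.2 h.le)
    rw [Set.uIcc_of_le hab] at hz
    nlinarith [hz.1]

lemma intervalIntegrable_aux {ξ k a b : ℝ} (hξ0 : ξ ≠ 0) (hk : 0 ≤ k) (hab : a ≤ b)
    (h0 : ξ < 0 ∨ 0 < 1 + ξ * a) :
    IntervalIntegrable (fun z => (1 + ξ * z) ^ (-k / ξ)) MeasureTheory.volume a b := by
  apply ContinuousOn.intervalIntegrable
  intro z hz
  apply ContinuousAt.continuousWithinAt
  apply ContinuousAt.rpow_const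
    (continuous_const.add (continuous_const.mul continuous_id)).continuousAt
  rcases hcond_aux hξ0 hab h0 z hz with h | h
  · exact Or.inl h
  · right
    rw [le_div_iff_of_neg h]
    nlinarith

lemma integral_aux {ξ k a b : ℝ} (hξ0 : ξ ≠ 0) (hξ1 : ξ < 1) (hk : 1 ≤ k)
    (hab : a ≤ b) (h0 : ξ < 0 ∨ 0 < 1 + ξ * a) :
    ∫ z in a..b, (1 + ξ * z) ^ (-k / ξ) =
      ((1 + ξ * b) ^ ((ξ - k) / ξ) - (1 + ξ * a) ^ ((ξ - k) / ξ)) / (ξ - k) := by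
  have hcond := hcond_aux hξ0 hab h0
  have := intervalIntegral.integral_eq_sub_of_hasDerivAt
    (f := fun z => (1 + ξ * z) ^ ((ξ - k) / ξ) / (ξ - k))
    (f' := fun z => (1 + ξ * z) ^ (-k / ξ))
    (a := a) (b := b)
    (fun z hz => hasDerivAt_aux hξ0 hξ1 hk (hcond z hz))
    (intervalIntegrable_aux hξ0 (by linarith) hab h0)
  rw [this]
  ring

theorem twCRPS_gpd (ξ : ℝ) (hξ0 : ξ ≠ 0) (hξ1 : ξ < 1)
    (τ y : ℝ) (hτ : 0 ≤ τ) (hy : 0 ≤ y)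
    (hτξ : ξ < 0 → τ ≤ -1 / ξ) (hyξ : ξ < 0 → y ≤ -1 / ξ) :
    twCRPS (gpdCDF ξ) τ y =
      max y τ - τ
        + 2 / (1 - ξ) *
          ((1 - gpdCDF ξ (max y τ)) ^ (1 - ξ) - (1 - gpdCDF ξ τ) ^ (1 - ξ))
        + 1 / (2 - ξ) * (1 - gpdCDF ξ τ) ^ (2 - ξ) := by
  have hξ2 : ξ - 1 ≠ 0 := by linarith
  have hξ3 : ξ - 2 ≠ 0 := by linarith
  set v := max y τ with hvdef
  have hv : τ ≤ v := le_max_right y τ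
  have hv0 : 0 ≤ v := le_trans hτ hv
  have hyv : y ≤ v := le_max_left y τ
  have hvξ : ξ < 0 → v ≤ -1 / ξ := fun h => max_le (hyξ h) (hτξ h)
  have hbase : ∀ x : ℝ, 0 ≤ x → (ξ < 0 → x ≤ -1 / ξ) → 0 ≤ 1 + ξ * x := by
    intro x hx hxξ
    rcases lt_or_gt_of_ne hξ0 with h | h
    · have h1 := mul_le_mul_of_nonpos_left (hxξ h) h.le
      have h2 : ξ * (-1 / ξ) = -1 := by field_simp
      rw [h2] at h1
      linarith
    · nlinarith
  have hA0 : 0 ≤ 1 + ξ * τ := hbase τ hτ hτξ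
  have hB0 : 0 ≤ 1 + ξ * v := hbase v hv0 hvξ
  have hcondτ : ξ < 0 ∨ 0 < 1 + ξ * τ := by
    rcases lt_or_gt_of_ne hξ0 with h | h
    · exact Or.inl h
    · right; nlinarith
  have hcondv : ξ < 0 ∨ 0 < 1 + ξ * v := by
    rcases lt_or_gt_of_ne hξ0 with h | h
    · exact Or.inl h
    · right; nlinarith
  set f := fun z => (gpdCDF ξ z - if y ≤ z then (1 : ℝ) else 0) ^ 2 with hfdef
  have hfm : Measurable f := by
    apply Measurable.pow _ measurable_const
    exact (gpd_measurable ξ).sub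
      (Measurable.ite measurableSet_Ici measurable_const measurable_const)
  have hfnn : ∀ z, 0 ≤ f z := fun z => sq_nonneg _
  have hfb : ∀ z, ‖f z‖ ≤ 1 := by
    intro z
    rw [Real.norm_eq_abs, abs_of_nonneg (hfnn z)]
    have h1 := gpd_nonneg (x := z) hξ0
    have h2 := gpd_le_one (x := z) hξ0
    show (gpdCDF ξ z - if y ≤ z then (1:ℝ) else 0) ^ 2 ≤ 1
    split_ifs <;> nlinarith
  have hfint : ∀ a b : ℝ, IntegrableOn f (Ioc a b) := fun a b =>
    Measure.integrableOn_of_bounded measure_Ioc_lt_top.ne hfm.aestronglyMeasurable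
      (ae_of_all _ hfb)
  -- pointwise formulas
  have hpt1 : ∀ z : ℝ, 0 ≤ z → 0 ≤ 1 + ξ * z → y ≤ z →
      f z = (1 + ξ * z) ^ (-2 / ξ) := by
    intro z h1 h2 h3
    simp only [hfdef, gpd_eq hξ0 h1 h2, if_pos h3]
    rw [show (-2 / ξ : ℝ) = -1 / ξ * 2 by ring, Real.rpow_mul h2, Real.rpow_two]
    ring
  have hpt2 : ∀ z : ℝ, 0 ≤ z → 0 ≤ 1 + ξ * z → z < y →
      f z = 1 - 2 * (1 + ξ * z) ^ (-1 / ξ) + (1 + ξ * z) ^ (-2 / ξ) := by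
    intro z h1 h2 h3
    simp only [hfdef, gpd_eq hξ0 h1 h2, if_neg (not_le.2 h3)]
    rw [show (-2 / ξ : ℝ) = -1 / ξ * 2 by ring, Real.rpow_mul h2, Real.rpow_two]
    ring
  -- the integral over (v, ∞)
  have hIoi : IntegrableOn f (Ioi v) ∧
      ∫ z in Ioi v, f z = (1 + ξ * v) ^ ((ξ - 2) / ξ) / (2 - ξ) := by
    rcases lt_or_gt_of_ne hξ0 with hneg | hpos
    · -- ξ < 0
      set m := -1 / ξ with hmdef
      have hm : v ≤ m := hvξ hneg
      have hm1 : 1 + ξ * m = 0 := by rw [hmdef]; field_simp; norm_num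
      have hf0 : EqOn f 0 (Ioi m) := by
        intro z hz
        have hz1 : m < z := hz
        have hz2 : (0:ℝ) < m := by
          rw [hmdef]
          exact div_pos_of_neg_of_neg (by norm_num) hneg
        have hz3 : 1 + ξ * z < 0 := by nlinarith
        have hgz : gpdCDF ξ z = 1 := by
          unfold gpdCDF
          rw [if_neg (not_lt.2 (by linarith : (0:ℝ) ≤ z)), if_neg (not_lt.2 hz3.le)]
        simp only [hfdef, hgz, if_pos (by linarith : y ≤ z)]
        norm_num
      have hint2 : IntegrableOn f (Ioi m) :=
        IntegrableOn.congr_fun integrableOn_zero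
          (fun z hz => (hf0 hz).symm) measurableSet_Ioi
      have hI2 : ∫ z in Ioi m, f z = 0 := by
        rw [setIntegral_congr_fun measurableSet_Ioi hf0]
        simp
      have hI1 : ∫ z in Ioc v m, f z =
          (1 + ξ * v) ^ ((ξ - 2) / ξ) / (2 - ξ) := by
        rw [← intervalIntegral.integral_of_le hm]
        rw [intervalIntegral.integral_congr (g := fun z => (1 + ξ * z) ^ (-2 / ξ))
          (by
            intro z hz
            rw [uIcc_of_le hm] at hz
            exact hpt1 z (le_trans hv0 hz.1) (by nlinarith [hz.2]) (le_trans hyv hz.1))]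
        rw [integral_aux hξ0 hξ1 one_le_two hm (Or.inl hneg), hm1,
          Real.zero_rpow (div_ne_zero hξ3 hξ0), zero_sub, neg_div, ← div_neg, neg_sub]
      constructor
      · rw [← Ioc_union_Ioi_eq_Ioi hm]
        exact (hfint v m).union hint2
      · rw [← Ioc_union_Ioi_eq_Ioi hm,
          setIntegral_union (Ioc_disjoint_Ioi_same) measurableSet_Ioi (hfint v m) hint2,
          hI1, hI2, add_zero]
    · -- ξ > 0
      have hev : (fun X : ℝ => ∫ z in v..X, f z) =ᶠ[atTop]
          (fun X : ℝ => ((1 + ξ * X) ^ ((ξ - 2) / ξ) - (1 + ξ * v) ^ ((ξ - 2) / ξ)) / (ξ - 2)) := by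
        filter_upwards [eventually_ge_atTop v] with X hX
        rw [intervalIntegral.integral_congr (g := fun z => (1 + ξ * z) ^ (-2 / ξ))
          (by
            intro z hz
            rw [uIcc_of_le hX] at hz
            exact hpt1 z (le_trans hv0 hz.1) (by nlinarith [hz.1]) (le_trans hyv hz.1))]
        exact integral_aux hξ0 hξ1 one_le_two hX hcondv
      have ht2 : Tendsto (fun X : ℝ => (1 + ξ * X) ^ ((ξ - 2) / ξ)) atTop (𝓝 0) := by
        have h1 : Tendsto (fun X : ℝ => 1 + ξ * X) atTop atTop :=
          tendsto_atTop_add_const_left atTop 1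
            ((tendsto_const_mul_atTop_of_pos hpos).2 tendsto_id)
        have h2 : (ξ - 2) / ξ = -((2 - ξ) / ξ) := by ring
        rw [h2]
        exact (tendsto_rpow_neg_atTop (div_pos (by linarith) hpos)).comp h1
      have ht3 : Tendsto
          (fun X : ℝ => ((1 + ξ * X) ^ ((ξ - 2) / ξ) - (1 + ξ * v) ^ ((ξ - 2) / ξ)) / (ξ - 2))
          atTop (𝓝 ((1 + ξ * v) ^ ((ξ - 2) / ξ) / (2 - ξ))) := by
        have h5 := (ht2.sub (tendsto_const_nhds
          (x := (1 + ξ * v) ^ ((ξ - 2) / ξ)))).div_const (ξ - 2)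
        have h4 : (0 - (1 + ξ * v) ^ ((ξ - 2) / ξ)) / (ξ - 2)
            = (1 + ξ * v) ^ ((ξ - 2) / ξ) / (2 - ξ) := by
          rw [zero_sub, neg_div, ← div_neg, neg_sub]
        rw [h4] at h5
        exact h5
      have htI : Tendsto (fun X : ℝ => ∫ z in v..X, f z) atTop
          (𝓝 ((1 + ξ * v) ^ ((ξ - 2) / ξ) / (2 - ξ))) := ht3.congr' hev.symm
      have hnorm : ∀ X : ℝ, (∫ z in v..X, ‖f z‖) = ∫ z in v..X, f z := by
        intro X
        apply intervalIntegral.integral_congr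
        intro z _
        exact Real.norm_of_nonneg (hfnn z)
      have hint : IntegrableOn f (Ioi v) := by
        apply integrableOn_Ioi_of_intervalIntegral_norm_tendsto
          ((1 + ξ * v) ^ ((ξ - 2) / ξ) / (2 - ξ)) v (fun i => hfint v i) tendsto_id
        simpa only [hnorm] using htI
      refine ⟨hint, tendsto_nhds_unique ?_ htI⟩
      exact intervalIntegral_tendsto_integral_Ioi v hint tendsto_id
  -- the integral over (τ, v]
  have hIoc : ∫ z in Ioc τ v, f z =
      (v - τ)
        - 2 * (((1 + ξ * v) ^ ((ξ - 1) / ξ) - (1 + ξ * τ) ^ ((ξ - 1) / ξ)) / (ξ - 1))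
        + ((1 + ξ * v) ^ ((ξ - 2) / ξ) - (1 + ξ * τ) ^ ((ξ - 2) / ξ)) / (ξ - 2) := by
    have hae : ∫ z in Ioc τ v, f z =
        ∫ z in τ..v, (1 - 2 * (1 + ξ * z) ^ (-1 / ξ) + (1 + ξ * z) ^ (-2 / ξ)) := by
      rw [← setIntegral_congr_set Ioo_ae_eq_Ioc,
        setIntegral_congr_fun measurableSet_Ioo
          (g := fun z => 1 - 2 * (1 + ξ * z) ^ (-1 / ξ) + (1 + ξ * z) ^ (-2 / ξ))
          (by
            intro z hz
            have hzy : z < y := by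
              by_contra h
              push_neg at h
              exact absurd (max_le h hz.1.le) (not_le.2 hz.2)
            apply hpt2 z (le_trans hτ hz.1.le) _ hzy
            rcases lt_or_gt_of_ne hξ0 with hneg | hpos
            · nlinarith [hz.2]
            · nlinarith [hz.1]),
        setIntegral_congr_set Ioo_ae_eq_Ioc, intervalIntegral.integral_of_le hv]
    rw [hae]
    have hi1 : IntervalIntegrable (fun z => (1 + ξ * z) ^ (-1 / ξ))
        MeasureTheory.volume τ v := by
      have := intervalIntegrable_aux (k := 1) hξ0 zero_le_one hv hcondτ
      simpa using this
    have hi2 : IntervalIntegrable (fun z => (1 + ξ * z) ^ (-2 / ξ))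
        MeasureTheory.volume τ v :=
      intervalIntegrable_aux (k := 2) hξ0 zero_le_two hv hcondτ
    rw [intervalIntegral.integral_add
        (intervalIntegrable_const.sub (hi1.const_mul 2)) hi2,
      intervalIntegral.integral_sub intervalIntegrable_const (hi1.const_mul 2),
      intervalIntegral.integral_const_mul, intervalIntegral.integral_const]
    have e1 := integral_aux (k := 1) hξ0 hξ1 le_rfl hv hcondτ
    have e2 := integral_aux (k := 2) hξ0 hξ1 one_le_two hv hcondτ
    rw [e1, e2]
    simp [smul_eq_mul]
  -- assemble
  have hsplit : twCRPS (gpdCDF ξ) τ y = (∫ z in Ioc τ v, f z) + ∫ z in Ioi v, f z := by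
    rw [twCRPS, ← Ioc_union_Ioi_eq_Ioi hv,
      setIntegral_union (Ioc_disjoint_Ioi_same) measurableSet_Ioi (hfint τ v) hIoi.1]
  rw [hsplit, hIoc, hIoi.2]
  have hgτ : 1 - gpdCDF ξ τ = (1 + ξ * τ) ^ (-1 / ξ) := by
    rw [gpd_eq hξ0 hτ hA0]; ring
  have hgv : 1 - gpdCDF ξ v = (1 + ξ * v) ^ (-1 / ξ) := by
    rw [gpd_eq hξ0 hv0 hB0]; ring
  have hexp : ∀ k : ℝ, (-1 / ξ) * (k - ξ) = (ξ - k) / ξ := by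
    intro k
    rw [div_mul_eq_mul_div]
    congr 1
    ring
  have hrw : ∀ x : ℝ, 0 ≤ x → ∀ k : ℝ, (x ^ (-1 / ξ)) ^ (k - ξ) = x ^ ((ξ - k) / ξ) := by
    intro x hx k
    rw [← Real.rpow_mul hx, hexp k]
  rw [hgτ, hgv,
    show (1 - ξ : ℝ) = 1 - ξ from rfl,
    hrw _ hB0 1, hrw _ hA0 1, hrw _ hA0 2]
  have h1ξ : (1:ℝ) - ξ ≠ 0 := by linarith
  have h2ξ : (2:ℝ) - ξ ≠ 0 := by linarith
  generalize (1 + ξ * τ) ^ ((ξ - 1) / ξ) = P1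
  generalize (1 + ξ * v) ^ ((ξ - 1) / ξ) = Q1
  generalize (1 + ξ * τ) ^ ((ξ - 2) / ξ) = P2
  generalize (1 + ξ * v) ^ ((ξ - 2) / ξ) = Q2
  field_simp
  ring
end

section
/- Let α > 0 and β > 0, and for shape a > 0 and rate β let F_{a,β} denote the gamma cumulative distribution function, F_{a,β}(x) = (β^a / Γ(a)) ∫_0^x t^{a−1} e^{−βt} dt for x ≥ 0 and F_{a,β}(x) = 0 for x < 0, where Γ is the gamma function. Let B(p, q) = Γ(p)Γ(q)/Γ(p+q) denote the beta function. Then for every threshold τ ≥ 0 and observation y ≥ 0, writing v = max(y, τ): twCRPS_τ(F_{α,β}, y) = −τ F_{α,β}(τ)² + v (2 F_{α,β}(v) − 1) + (α/β) (1 − F_{α,β}(τ)² + 2 F_{α,β}(τ) F_{α+1,β}(τ) − 2 F_{α+1,β}(v)) − (1 − F_{2α,β}(2τ)) / (β B(1/2, α)). -/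
open MeasureTheory Set

/-- Gamma CDF with shape `a` and rate `β`:
`F_{a,β}(x) = (β^a / Γ(a)) ∫_0^x t^{a−1} e^{−βt} dt` for `x ≥ 0`, and `0` for `x < 0`. -/
noncomputable def gammaCDF (a β : ℝ) (x : ℝ) : ℝ :=
  if x < 0 then 0
  else (β ^ a / Real.Gamma a) * ∫ t in Set.Ioc (0 : ℝ) x, t ^ (a - 1) * Real.exp (-β * t)

/-- Beta function `B(p, q) = Γ(p)Γ(q)/Γ(p+q)`. -/
noncomputable def betaFn (p q : ℝ) : ℝ :=
  Real.Gamma p * Real.Gamma q / Real.Gamma (p + q)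

namespace TWAux

open Real Filter Topology intervalIntegral

variable {a β : ℝ}

/-- The gamma pdf. -/
noncomputable def gpdf (a β x : ℝ) : ℝ :=
  β ^ a / Real.Gamma a * (x ^ (a - 1) * Real.exp (-β * x))

lemma gker_intervalIntegrable (ha : 0 < a) (x y : ℝ) :
    IntervalIntegrable (fun t : ℝ => t ^ (a - 1) * Real.exp (-β * t)) volume x y := by
  have h1 : IntervalIntegrable (fun t : ℝ => t ^ (a - 1)) volume x y :=
    intervalIntegrable_rpow' (by linarith)
  have h2 : Continuous fun t : ℝ => Real.exp (-β * t) :=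
    Real.continuous_exp.comp (continuous_const.mul continuous_id')
  exact h1.mul_continuousOn h2.continuousOn

lemma gker_integrableOn (ha : 0 < a) (hβ : 0 < β) :
    IntegrableOn (fun t : ℝ => t ^ (a - 1) * Real.exp (-β * t)) (Ioi 0) := by
  have h0 := Real.GammaIntegral_convergent ha
  have h1 : IntegrableOn (fun t : ℝ => Real.exp (-(β * t)) * (β * t) ^ (a - 1)) (Ioi 0) := by
    have := (integrableOn_Ioi_comp_mul_left_iff
      (fun x : ℝ => Real.exp (-x) * x ^ (a - 1)) 0 hβ).2
    simpa using this (by simpa using h0)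
  have h2 : IntegrableOn (fun t : ℝ =>
      (β ^ (a - 1))⁻¹ * (Real.exp (-(β * t)) * (β * t) ^ (a - 1))) (Ioi 0) := h1.const_mul _
  apply h2.congr_fun ?_ measurableSet_Ioi
  intro t ht
  simp only
  rw [Real.mul_rpow hβ.le (le_of_lt ht), neg_mul]
  have hb : (β : ℝ) ^ (a - 1) ≠ 0 := (Real.rpow_pos_of_pos hβ _).ne'
  field_simp

lemma gammaCDF_of_nonneg {a β x : ℝ} (hx : 0 ≤ x) :
    gammaCDF a β x
      = β ^ a / Real.Gamma a * ∫ t in (0:ℝ)..x, t ^ (a - 1) * Real.exp (-β * t) := by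
  rw [gammaCDF, if_neg (not_lt.2 hx), intervalIntegral.integral_of_le hx]

lemma gammaCDF_eq_max (a β x : ℝ) :
    gammaCDF a β x
      = β ^ a / Real.Gamma a * ∫ t in (0:ℝ)..(max x 0), t ^ (a - 1) * Real.exp (-β * t) := by
  rcases le_or_gt 0 x with hx | hx
  · rw [gammaCDF_of_nonneg hx, max_eq_left hx]
  · rw [gammaCDF, if_pos hx, max_eq_right hx.le, intervalIntegral.integral_same, mul_zero]

lemma continuous_gammaCDF (ha : 0 < a) (hβ : 0 < β) : Continuous (gammaCDF a β) := by
  have : Continuous fun x : ℝ =>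
      β ^ a / Real.Gamma a * ∫ t in (0:ℝ)..(max x 0), t ^ (a - 1) * Real.exp (-β * t) := by
    apply continuous_const.mul
    exact (intervalIntegral.continuous_primitive
      (fun x y => gker_intervalIntegrable ha x y) 0).comp (continuous_id.max continuous_const)
  simpa only [← gammaCDF_eq_max] using this

lemma integral_gker_Ioi (ha : 0 < a) (hβ : 0 < β) :
    ∫ t in Ioi (0:ℝ), t ^ (a - 1) * Real.exp (-β * t) = Real.Gamma a / β ^ a := by
  have := Real.integral_rpow_mul_exp_neg_mul_Ioi ha hβ
  simp only [neg_mul] at this ⊢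
  rw [this, Real.div_rpow (by norm_num) hβ.le, Real.one_rpow]
  field_simp

lemma tendsto_gammaCDF_atTop (ha : 0 < a) (hβ : 0 < β) :
    Tendsto (gammaCDF a β) atTop (𝓝 1) := by
  have h := intervalIntegral_tendsto_integral_Ioi 0 (gker_integrableOn ha hβ) tendsto_id
  have h2 : Tendsto (fun x : ℝ => β ^ a / Real.Gamma a *
      ∫ t in (0:ℝ)..x, t ^ (a - 1) * Real.exp (-β * t)) atTop
      (𝓝 (β ^ a / Real.Gamma a * (Real.Gamma a / β ^ a))) := by
    rw [← integral_gker_Ioi ha hβ]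
    exact (tendsto_const_nhds.mul h)
  have heq : (fun x : ℝ => β ^ a / Real.Gamma a *
      ∫ t in (0:ℝ)..x, t ^ (a - 1) * Real.exp (-β * t)) =ᶠ[atTop] gammaCDF a β := by
    filter_upwards [eventually_ge_atTop (0:ℝ)] with x hx
    rw [gammaCDF_of_nonneg hx]
  have : β ^ a / Real.Gamma a * (Real.Gamma a / β ^ a) = 1 := by
    field_simp
  rw [this] at h2
  exact h2.congr' heq

lemma gammaCDF_nonneg (ha : 0 < a) (hβ : 0 < β) (x : ℝ) : 0 ≤ gammaCDF a β x := by
  rw [gammaCDF]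
  split_ifs
  · exact le_refl 0
  · apply mul_nonneg (by positivity)
    apply setIntegral_nonneg measurableSet_Ioc
    intro t ht
    have h1 : 0 < t := ht.1
    positivity

lemma gammaCDF_le_one (ha : 0 < a) (hβ : 0 < β) (x : ℝ) : gammaCDF a β x ≤ 1 := by
  rw [gammaCDF]
  split_ifs
  · norm_num
  · have h1 : (∫ t in Ioc (0:ℝ) x, t ^ (a - 1) * Real.exp (-β * t))
        ≤ ∫ t in Ioi (0:ℝ), t ^ (a - 1) * Real.exp (-β * t) := by
      apply setIntegral_mono_set (gker_integrableOn ha hβ)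
      · filter_upwards [ae_restrict_mem measurableSet_Ioi] with t ht
        have h1 : 0 < t := ht
        positivity
      · exact HasSubset.Subset.eventuallyLE Ioc_subset_Ioi_self
    calc β ^ a / Real.Gamma a * ∫ t in Ioc (0:ℝ) x, t ^ (a - 1) * Real.exp (-β * t)
        ≤ β ^ a / Real.Gamma a * ∫ t in Ioi (0:ℝ), t ^ (a - 1) * Real.exp (-β * t) := by
          apply mul_le_mul_of_nonneg_left h1 (by positivity)
      _ = 1 := by
          rw [integral_gker_Ioi ha hβ]
          have h2 : (0:ℝ) < β ^ a := Real.rpow_pos_of_pos hβ a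
          have h3 : (0:ℝ) < Real.Gamma a := Real.Gamma_pos_of_pos ha
          field_simp

lemma one_sub_gammaCDF (ha : 0 < a) (hβ : 0 < β) {x : ℝ} (hx : 0 ≤ x) :
    1 - gammaCDF a β x
      = β ^ a / Real.Gamma a * ∫ t in Ioi x, t ^ (a - 1) * Real.exp (-β * t) := by
  have hsplit : (∫ t in Ioi (0:ℝ), t ^ (a - 1) * Real.exp (-β * t))
      = (∫ t in Ioc (0:ℝ) x, t ^ (a - 1) * Real.exp (-β * t))
        + ∫ t in Ioi x, t ^ (a - 1) * Real.exp (-β * t) := by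
    rw [← setIntegral_union (Ioc_disjoint_Ioi le_rfl) measurableSet_Ioi
      ((gker_integrableOn ha hβ).mono_set Ioc_subset_Ioi_self)
      ((gker_integrableOn ha hβ).mono_set (Ioi_subset_Ioi hx)),
      Ioc_union_Ioi_eq_Ioi hx]
  rw [gammaCDF, if_neg (not_lt.2 hx)]
  have h2 : (0:ℝ) < β ^ a := Real.rpow_pos_of_pos hβ a
  have h3 : (0:ℝ) < Real.Gamma a := Real.Gamma_pos_of_pos ha
  have h4 := integral_gker_Ioi ha hβ
  rw [h4] at hsplit
  have h5 : (∫ t in Ioi x, t ^ (a - 1) * Real.exp (-β * t))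
      = Real.Gamma a / β ^ a - ∫ t in Ioc (0:ℝ) x, t ^ (a - 1) * Real.exp (-β * t) := by
    linarith
  have h6 : β ^ a / Real.Gamma a * (Real.Gamma a / β ^ a) = 1 := by field_simp
  rw [h5, mul_sub, h6]

/-- tail bound constant -/
noncomputable def Ctail (a β : ℝ) : ℝ := β ^ a / Real.Gamma a * (Real.Gamma a / (β/2) ^ a)

lemma one_sub_gammaCDF_le (ha : 0 < a) (hβ : 0 < β) {x : ℝ} (hx : 0 ≤ x) :
    1 - gammaCDF a β x ≤ Ctail a β * Real.exp (-(β/2) * x) := by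
  have hβ2 : 0 < β / 2 := by linarith
  have key : ∀ t ∈ Ioi x, t ^ (a - 1) * Real.exp (-β * t)
      ≤ Real.exp (-(β/2) * x) * (t ^ (a - 1) * Real.exp (-(β/2) * t)) := by
    intro t ht
    have htx : x < t := ht
    have ht0 : 0 < t := lt_of_le_of_lt hx htx
    have hexp : Real.exp (-β * t) = Real.exp (-(β/2) * t) * Real.exp (-(β/2) * t) := by
      rw [← Real.exp_add]; ring_nf
    have hmono : Real.exp (-(β/2) * t) ≤ Real.exp (-(β/2) * x) := by
      apply Real.exp_le_exp.2
      nlinarith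
    rw [hexp]
    have htp : (0:ℝ) ≤ t ^ (a - 1) := (Real.rpow_pos_of_pos ht0 _).le
    have he : (0:ℝ) < Real.exp (-(β/2) * t) := Real.exp_pos _
    calc t ^ (a - 1) * (Real.exp (-(β/2) * t) * Real.exp (-(β/2) * t))
        = (t ^ (a - 1) * Real.exp (-(β/2) * t)) * Real.exp (-(β/2) * t) := by ring
      _ ≤ (t ^ (a - 1) * Real.exp (-(β/2) * t)) * Real.exp (-(β/2) * x) := by
          exact mul_le_mul_of_nonneg_left hmono (by positivity)
      _ = Real.exp (-(β/2) * x) * (t ^ (a - 1) * Real.exp (-(β/2) * t)) := by ring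
  have hint1 : IntegrableOn (fun t : ℝ => t ^ (a - 1) * Real.exp (-β * t)) (Ioi x) :=
    (gker_integrableOn ha hβ).mono_set (Ioi_subset_Ioi hx)
  have hint2 : IntegrableOn
      (fun t : ℝ => Real.exp (-(β/2) * x) * (t ^ (a - 1) * Real.exp (-(β/2) * t))) (Ioi x) :=
    (((gker_integrableOn ha hβ2).mono_set (Ioi_subset_Ioi hx)).const_mul _)
  have h5 : (∫ t in Ioi x, t ^ (a - 1) * Real.exp (-β * t))
      ≤ ∫ t in Ioi x, Real.exp (-(β/2) * x) * (t ^ (a - 1) * Real.exp (-(β/2) * t)) :=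
    setIntegral_mono_on hint1 hint2 measurableSet_Ioi key
  have h6 : (∫ t in Ioi x, Real.exp (-(β/2) * x) * (t ^ (a - 1) * Real.exp (-(β/2) * t)))
      = Real.exp (-(β/2) * x) * ∫ t in Ioi x, t ^ (a - 1) * Real.exp (-(β/2) * t) :=
    integral_const_mul _ _
  have h7 : (∫ t in Ioi x, t ^ (a - 1) * Real.exp (-(β/2) * t))
      ≤ ∫ t in Ioi (0:ℝ), t ^ (a - 1) * Real.exp (-(β/2) * t) := by
    apply setIntegral_mono_set (gker_integrableOn ha hβ2)
    · filter_upwards [ae_restrict_mem measurableSet_Ioi] with t ht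
      have h1 : 0 < t := ht
      positivity
    · exact HasSubset.Subset.eventuallyLE (Ioi_subset_Ioi hx)
  rw [integral_gker_Ioi ha hβ2] at h7
  rw [one_sub_gammaCDF ha hβ hx, Ctail]
  have h2 : (0:ℝ) < β ^ a := Real.rpow_pos_of_pos hβ a
  have h3 : (0:ℝ) < Real.Gamma a := Real.Gamma_pos_of_pos ha
  have he : (0:ℝ) < Real.exp (-(β/2) * x) := Real.exp_pos _
  calc β ^ a / Real.Gamma a * ∫ t in Ioi x, t ^ (a - 1) * Real.exp (-β * t)
      ≤ β ^ a / Real.Gamma a * (Real.exp (-(β/2) * x)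
          * ∫ t in Ioi x, t ^ (a - 1) * Real.exp (-(β/2) * t)) := by
        rw [← h6]; exact mul_le_mul_of_nonneg_left h5 (by positivity)
    _ ≤ β ^ a / Real.Gamma a * (Real.exp (-(β/2) * x) * (Real.Gamma a / (β/2) ^ a)) := by
        apply mul_le_mul_of_nonneg_left _ (by positivity)
        exact mul_le_mul_of_nonneg_left h7 he.le
    _ = β ^ a / Real.Gamma a * (Real.Gamma a / (β/2) ^ a) * Real.exp (-(β/2) * x) := by ring

lemma hasDerivAt_gammaCDF (ha : 0 < a) (hβ : 0 < β) {x : ℝ} (hx : 0 < x) :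
    HasDerivAt (gammaCDF a β) (gpdf a β x) x := by
  have hmeas : Measurable fun t : ℝ => t ^ (a - 1) * Real.exp (-β * t) := by
    apply Measurable.mul
    · exact (measurable_id.pow_const _)
    · exact (Real.measurable_exp.comp (measurable_const.mul measurable_id))
  have h1 : HasDerivAt (fun u : ℝ => ∫ t in (0:ℝ)..u, t ^ (a - 1) * Real.exp (-β * t))
      (x ^ (a - 1) * Real.exp (-β * x)) x := by
    apply intervalIntegral.integral_hasDerivAt_right (gker_intervalIntegrable ha 0 x)
      ⟨univ, univ_mem, hmeas.aestronglyMeasurable⟩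
    apply ContinuousAt.mul
    · exact Real.continuousAt_rpow_const x (a - 1) (Or.inl hx.ne')
    · exact (Real.continuous_exp.comp (continuous_const.mul continuous_id')).continuousAt
  have h2 := h1.const_mul (β ^ a / Real.Gamma a)
  apply h2.congr_of_eventuallyEq
  filter_upwards [eventually_gt_nhds hx] with u hu
  rw [gammaCDF_of_nonneg hu.le]

lemma gammaCDF_succ_sub (ha : 0 < a) (hβ : 0 < β) {x : ℝ} (hx : 0 ≤ x) :
    gammaCDF a β x - gammaCDF (a+1) β x
      = β ^ a * x ^ a * Real.exp (-β * x) / Real.Gamma (a+1) := by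
  have hIA := gker_intervalIntegrable (a := a) (β := β) ha 0 x
  have hIB := gker_intervalIntegrable (a := a+1) (β := β) (by linarith) 0 x
  have hkey : a * (∫ t in (0:ℝ)..x, t ^ (a-1) * Real.exp (-β*t))
      - β * (∫ t in (0:ℝ)..x, t ^ (a+1-1) * Real.exp (-β*t))
      = x ^ a * Real.exp (-β * x) := by
    have hFTC : ∫ t in (0:ℝ)..x,
        (a * (t ^ (a-1) * Real.exp (-β*t)) - β * (t ^ (a+1-1) * Real.exp (-β*t)))
        = x ^ a * Real.exp (-β*x) - ((0:ℝ) ^ a * Real.exp (-β*0)) := by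
      apply intervalIntegral.integral_eq_sub_of_hasDeriv_right_of_le hx
        (f := fun t : ℝ => t ^ a * Real.exp (-β * t))
      · apply ContinuousOn.mul
        · apply Continuous.continuousOn
          exact continuous_iff_continuousAt.2 fun t => Real.continuousAt_rpow_const t a (Or.inr ha.le)
        · exact (Real.continuous_exp.comp (continuous_const.mul continuous_id')).continuousOn
      · intro t ht
        have ht0 : t ≠ 0 := ne_of_gt ht.1
        have h1 : HasDerivAt (fun t : ℝ => t ^ a) (a * t ^ (a-1)) t :=
          Real.hasDerivAt_rpow_const (Or.inl ht0)
        have h2 : HasDerivAt (fun t : ℝ => Real.exp (-β * t))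
            (Real.exp (-β * t) * (-β * 1)) t :=
          ((hasDerivAt_id t).const_mul (-β)).exp
        have h4 : t ^ (a+1-1) = t ^ a := by norm_num
        rw [h4]
        have h3 := (h1.mul h2).hasDerivWithinAt (s := Ioi t)
        convert h3 using 1
        · rfl
        · ring
      · exact ((hIA.const_mul a).sub (hIB.const_mul β))
    rw [intervalIntegral.integral_sub (hIA.const_mul a) (hIB.const_mul β),
      intervalIntegral.integral_const_mul, intervalIntegral.integral_const_mul,
      Real.zero_rpow ha.ne'] at hFTC
    simpa using hFTC
  rw [gammaCDF_of_nonneg hx, gammaCDF_of_nonneg hx]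
  have hG : Real.Gamma (a+1) = a * Real.Gamma a := Real.Gamma_add_one ha.ne'
  have hb : β ^ (a+1) = β ^ a * β := Real.rpow_add_one hβ.ne' a
  have h3 : (0:ℝ) < Real.Gamma a := Real.Gamma_pos_of_pos ha
  rw [hG, hb]
  have h2 : (0:ℝ) < β ^ a := Real.rpow_pos_of_pos hβ a
  have hsimp : a + 1 - 1 = a := by ring
  simp only [hsimp, neg_mul] at hkey ⊢
  field_simp
  linear_combination hkey

lemma gpdf_succ (ha : 0 < a) (hβ : 0 < β) {x : ℝ} (hx : 0 < x) :
    a / β * gpdf (a+1) β x = x * gpdf a β x := by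
  unfold gpdf
  have hG : Real.Gamma (a+1) = a * Real.Gamma a := Real.Gamma_add_one ha.ne'
  have hb : β ^ (a+1) = β ^ a * β := Real.rpow_add_one hβ.ne' a
  have hxp : x ^ (a+1-1) = x ^ (a-1) * x := by
    rw [show a+1-1 = (a-1)+1 by ring, Real.rpow_add_one hx.ne']
  have h3 : (0:ℝ) < Real.Gamma a := Real.Gamma_pos_of_pos ha
  rw [hG, hb, hxp]
  field_simp

lemma dup_identity (ha : 0 < a) (hβ : 0 < β) {x : ℝ} (hx : 0 < x) :
    2 * a / β * gpdf a β x * (β ^ a * x ^ a * Real.exp (-β * x) / Real.Gamma (a+1))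
      = 2 * gpdf (2*a) β (2*x) / (β * betaFn (1/2) a) := by
  have hπ : (0:ℝ) < Real.sqrt π := Real.sqrt_pos.2 Real.pi_pos
  have hΓ : (0:ℝ) < Real.Gamma a := Real.Gamma_pos_of_pos ha
  have hΓ2 : (0:ℝ) < Real.Gamma (a + 1/2) := Real.Gamma_pos_of_pos (by linarith)
  have h8 : (2:ℝ) ^ (1-2*a) * 2 ^ (2*a-1) = 1 := by
    rw [← Real.rpow_add two_pos]; norm_num
  have hdup : Real.Gamma a * Real.Gamma (a + 1/2) * 2 ^ (2*a-1)
      = Real.Gamma (2*a) * Real.sqrt π := by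
    have hd := Real.Gamma_mul_Gamma_add_half a
    linear_combination (2:ℝ) ^ (2*a-1) * hd + Real.Gamma (2*a) * Real.sqrt π * h8
  have hΓ2a : Real.Gamma (2*a)
      = Real.Gamma a * Real.Gamma (a + 1/2) * 2 ^ (2*a-1) / Real.sqrt π := by
    rw [eq_div_iff hπ.ne']; linarith [hdup]
  have h1 : x ^ (2*a-1) = x ^ (a-1) * x ^ a := by
    rw [← Real.rpow_add hx]; congr 1; ring
  have h2 : Real.exp (-β * (2*x)) = Real.exp (-β*x) * Real.exp (-β*x) := by
    rw [← Real.exp_add]; congr 1; ring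
  have h3 : β ^ (2*a) = β ^ a * β ^ a := by
    rw [← Real.rpow_add hβ]; congr 1; ring
  have h4 : (2*x) ^ (2*a-1) = 2 ^ (2*a-1) * x ^ (2*a-1) :=
    Real.mul_rpow (by norm_num) hx.le
  have h5 : Real.Gamma (a+1) = a * Real.Gamma a := Real.Gamma_add_one ha.ne'
  unfold gpdf betaFn
  rw [h4, h5, Real.Gamma_one_half_eq, show (1/2:ℝ) + a = a + 1/2 from by ring,
    hΓ2a, h3, h1, h2]
  have h9 : (0:ℝ) < β ^ a := Real.rpow_pos_of_pos hβ a
  have h10 : (0:ℝ) < (2:ℝ) ^ (2*a-1) := Real.rpow_pos_of_pos two_pos _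
  field_simp

/-- the twCRPS integrand -/
noncomputable def gfun (a β y z : ℝ) : ℝ :=
  (gammaCDF a β z - if y ≤ z then 1 else 0) ^ 2

variable {y : ℝ}

lemma twCRPS_eq (a β τ y : ℝ) :
    twCRPS (gammaCDF a β) τ y = ∫ z in Ioi τ, gfun a β y z := rfl

lemma gfun_measurable (ha : 0 < a) (hβ : 0 < β) (y : ℝ) :
    Measurable (gfun a β y) := by
  apply Measurable.pow_const
  apply Measurable.sub
  · exact (continuous_gammaCDF ha hβ).measurable
  · exact Measurable.ite measurableSet_Ici measurable_const measurable_const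

lemma gfun_of_lt (hz : z < y) : gfun a β y z = (gammaCDF a β z) ^ 2 := by
  rw [gfun, if_neg (not_le.2 hz), sub_zero]

lemma gfun_of_ge (hz : y ≤ z) : gfun a β y z = (gammaCDF a β z - 1) ^ 2 := by
  rw [gfun, if_pos hz]

lemma gfun_integrable (ha : 0 < a) (hβ : 0 < β) (hy : 0 ≤ y) :
    Integrable (gfun a β y) := by
  rw [← integrableOn_univ, ← Iio_union_Ici (a := (0:ℝ)), integrableOn_union,
    ← Icc_union_Ioi_eq_Ici hy, integrableOn_union]
  refine ⟨?_, ?_, ?_⟩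
  · -- zero on negatives
    apply IntegrableOn.congr_fun (integrableOn_zero) ?_ measurableSet_Iio
    intro z hz
    have hz0 : z < 0 := hz
    rw [gfun_of_lt (lt_of_lt_of_le hz0 hy), gammaCDF, if_pos hz0]
    norm_num
  · -- bounded on Icc 0 y
    apply Measure.integrableOn_of_bounded (M := 1) (measure_Icc_lt_top).ne
      (gfun_measurable ha hβ y).aestronglyMeasurable
    filter_upwards [ae_restrict_mem measurableSet_Icc] with z hz
    have h0 := gammaCDF_nonneg ha hβ z
    have h1 := gammaCDF_le_one ha hβ z
    rw [gfun, Real.norm_eq_abs]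
    split_ifs <;> rw [abs_le] <;> constructor <;> nlinarith
  · -- tail
    apply Integrable.mono'
      ((exp_neg_integrableOn_Ioi y hβ).const_mul ((Ctail a β)^2))
      (gfun_measurable ha hβ y).aestronglyMeasurable.restrict
    filter_upwards [ae_restrict_mem measurableSet_Ioi] with z hz
    have hzy : y ≤ z := le_of_lt hz
    have hz0 : 0 ≤ z := le_trans hy hzy
    have h0 := gammaCDF_le_one ha hβ z
    have h1 := one_sub_gammaCDF_le ha hβ hz0
    rw [gfun_of_ge hzy, Real.norm_eq_abs]
    have h2 : |(gammaCDF a β z - 1)^2| = (1 - gammaCDF a β z)^2 := by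
      rw [abs_of_nonneg (sq_nonneg _)]; ring
    rw [h2]
    have h3 : (1 - gammaCDF a β z)^2 ≤ (Ctail a β * Real.exp (-(β/2) * z))^2 := by
      apply pow_le_pow_left₀ (by linarith) h1
    calc (1 - gammaCDF a β z)^2 ≤ (Ctail a β * Real.exp (-(β/2) * z))^2 := h3
      _ = (Ctail a β)^2 * Real.exp (-β * z) := by
          rw [mul_pow, sq (Real.exp _), ← Real.exp_add]; congr 2; ring

lemma twCRPS_repr (ha : 0 < a) (hβ : 0 < β) (hy : 0 ≤ y) {τ : ℝ} (hτ : 0 ≤ τ) :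
    twCRPS (gammaCDF a β) τ y
      = (∫ z in Ioi (0:ℝ), gfun a β y z) - ∫ z in (0:ℝ)..τ, gfun a β y z := by
  rw [twCRPS_eq, intervalIntegral.integral_of_le hτ]
  have hsplit : (∫ z in Ioi (0:ℝ), gfun a β y z)
      = (∫ z in Ioc (0:ℝ) τ, gfun a β y z) + ∫ z in Ioi τ, gfun a β y z := by
    rw [← setIntegral_union (Ioc_disjoint_Ioi le_rfl) measurableSet_Ioi
      ((gfun_integrable ha hβ hy).integrableOn)
      ((gfun_integrable ha hβ hy).integrableOn),
      Ioc_union_Ioi_eq_Ioi hτ]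
  rw [hsplit]; ring

lemma hasDerivAt_twCRPS (ha : 0 < a) (hβ : 0 < β) (hy : 0 ≤ y) {x : ℝ}
    (hx : 0 < x) (hxy : x ≠ y) :
    HasDerivAt (fun τ => twCRPS (gammaCDF a β) τ y) (-(gfun a β y x)) x := by
  have hcontg : ContinuousAt (gfun a β y) x := by
    rcases lt_or_gt_of_ne hxy with h | h
    · have hc : ContinuousAt (fun z => (gammaCDF a β z) ^ 2) x :=
        (((continuous_gammaCDF ha hβ).pow 2)).continuousAt
      apply hc.congr
      filter_upwards [eventually_lt_nhds h] with z hz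
      rw [gfun_of_lt hz]
    · have hc : ContinuousAt (fun z => (gammaCDF a β z - 1) ^ 2) x :=
        ((((continuous_gammaCDF ha hβ).sub continuous_const).pow 2)).continuousAt
      apply hc.congr
      filter_upwards [eventually_gt_nhds h] with z hz
      rw [gfun_of_ge hz.le]
  have h1 : HasDerivAt (fun τ => ∫ z in (0:ℝ)..τ, gfun a β y z) (gfun a β y x) x := by
    apply intervalIntegral.integral_hasDerivAt_right
      ((gfun_integrable ha hβ hy).intervalIntegrable)
      ⟨univ, univ_mem, (gfun_measurable ha hβ y).aestronglyMeasurable⟩ hcontg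
  have h2 := (hasDerivAt_const x (∫ z in Ioi (0:ℝ), gfun a β y z)).sub h1
  rw [zero_sub] at h2
  apply h2.congr_of_eventuallyEq
  filter_upwards [eventually_gt_nhds hx] with u hu
  rw [twCRPS_repr ha hβ hy hu.le]
  rfl

lemma tendsto_twCRPS_atTop (ha : 0 < a) (hβ : 0 < β) (hy : 0 ≤ y) :
    Tendsto (fun τ => twCRPS (gammaCDF a β) τ y) atTop (𝓝 0) := by
  have h1 := intervalIntegral_tendsto_integral_Ioi 0
    ((gfun_integrable ha hβ hy).integrableOn) (tendsto_id (α := ℝ))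
  have h2 : Tendsto (fun τ => (∫ z in Ioi (0:ℝ), gfun a β y z)
      - ∫ z in (0:ℝ)..τ, gfun a β y z) atTop (𝓝 0) := by
    have := tendsto_const_nhds (α := ℝ)
      (x := ∫ z in Ioi (0:ℝ), gfun a β y z) (f := atTop (α := ℝ)) |>.sub h1
    simpa using this
  apply h2.congr'
  filter_upwards [eventually_ge_atTop (0:ℝ)] with τ hτ
  rw [twCRPS_repr ha hβ hy hτ]

lemma continuousOn_twCRPS (ha : 0 < a) (hβ : 0 < β) (hy : 0 ≤ y) :
    ContinuousOn (fun τ => twCRPS (gammaCDF a β) τ y) (Ici 0) := by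
  apply ContinuousOn.congr (f := fun τ => (∫ z in Ioi (0:ℝ), gfun a β y z)
      - ∫ z in (0:ℝ)..τ, gfun a β y z)
  · apply ContinuousOn.sub continuousOn_const
    apply Continuous.continuousOn
    exact intervalIntegral.continuous_primitive
      (fun u v => (gfun_integrable ha hβ hy).intervalIntegrable) 0
  · intro τ hτ
    exact twCRPS_repr ha hβ hy hτ

/-- The claimed closed form, as a function of the threshold. -/
noncomputable def Rfun (a β y τ : ℝ) : ℝ :=
  -τ * (gammaCDF a β τ) ^ 2
    + max y τ * (2 * gammaCDF a β (max y τ) - 1)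
    + a / β *
      (1 - (gammaCDF a β τ) ^ 2 + 2 * gammaCDF a β τ * gammaCDF (a + 1) β τ
        - 2 * gammaCDF (a + 1) β (max y τ))
    - (1 - gammaCDF (2 * a) β (2 * τ)) / (β * betaFn (1 / 2) a)

lemma continuous_Rfun (ha : 0 < a) (hβ : 0 < β) (y : ℝ) : Continuous (Rfun a β y) := by
  have hF := continuous_gammaCDF ha hβ
  have hF1 := continuous_gammaCDF (a := a+1) (β := β) (by linarith) hβ
  have hF2 := continuous_gammaCDF (a := 2*a) (β := β) (by linarith) hβ
  have hmax : Continuous (fun τ : ℝ => max y τ) := continuous_const.max continuous_id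
  unfold Rfun
  refine Continuous.sub ?_ ?_
  · refine Continuous.add (Continuous.add ?_ ?_) ?_
    · exact (continuous_id.neg).mul (hF.pow 2)
    · exact hmax.mul ((continuous_const.mul (hF.comp hmax)).sub continuous_const)
    · apply continuous_const.mul
      exact ((continuous_const.sub (hF.pow 2)).add ((continuous_const.mul hF).mul hF1)).sub
        (continuous_const.mul (hF1.comp hmax))
  · exact (continuous_const.sub (hF2.comp (continuous_const.mul continuous_id))).div_const _

lemma hasDerivAt_gammaCDF2 (ha : 0 < a) (hβ : 0 < β) {x : ℝ} (hx : 0 < x) :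
    HasDerivAt (fun τ : ℝ => gammaCDF (2*a) β (2*τ)) (2 * gpdf (2*a) β (2*x)) x := by
  have h := (hasDerivAt_gammaCDF (a := 2*a) (β := β) (by linarith) hβ
    (by linarith : (0:ℝ) < 2*x)).comp x ((hasDerivAt_id x).const_mul 2)
  exact h.congr_deriv (by ring)

lemma hkey_scalar (ha : 0 < a) (hβ : 0 < β) {x : ℝ} (hx : 0 < x) :
    2 * a / β * gpdf a β x * (gammaCDF a β x - gammaCDF (a+1) β x)
      = 2 * gpdf (2*a) β (2*x) / (β * betaFn (1/2) a) := by
  rw [gammaCDF_succ_sub ha hβ hx.le]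
  exact dup_identity ha hβ hx

lemma hasDerivAt_Rfun_gt (ha : 0 < a) (hβ : 0 < β) {x : ℝ}
    (hx : 0 < x) (hxy : y < x) :
    HasDerivAt (Rfun a β y) (-(gammaCDF a β x - 1)^2) x := by
  have hF := hasDerivAt_gammaCDF ha hβ hx
  have hF1 := hasDerivAt_gammaCDF (a := a+1) (β := β) (by linarith) hβ hx
  have hF2 := hasDerivAt_gammaCDF2 ha hβ hx
  have p1 := ((hasDerivAt_id' x).neg.mul (hF.pow 2))
  have p2 := (hasDerivAt_id' x).mul ((hF.const_mul 2).sub_const 1)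
  have p3 := ((((hF.pow 2).const_sub 1).add ((hF.const_mul 2).mul hF1)).sub
    (hF1.const_mul 2)).const_mul (a/β)
  have p4 := (hF2.const_sub 1).div_const (β * betaFn (1/2) a)
  have hbig := ((p1.add p2).add p3).sub p4
  have heq : Rfun a β y =ᶠ[nhds x] (fun τ => -τ * (gammaCDF a β τ) ^ 2
      + τ * (2 * gammaCDF a β τ - 1)
      + a / β * (1 - (gammaCDF a β τ) ^ 2
          + 2 * gammaCDF a β τ * gammaCDF (a + 1) β τ - 2 * gammaCDF (a + 1) β τ)
      - (1 - gammaCDF (2 * a) β (2 * τ)) / (β * betaFn (1 / 2) a)) := by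
    filter_upwards [eventually_gt_nhds hxy] with τ hτ
    simp only [Rfun, max_eq_right hτ.le]
  have hfinal := HasDerivAt.congr_of_eventuallyEq hbig heq
  have hsucc := gpdf_succ ha hβ hx
  have hkey := hkey_scalar ha hβ hx
  exact hfinal.congr_deriv (Eq.symm (by simp only [Pi.neg_apply, Pi.pow_apply]; linear_combination hkey - (2*gammaCDF a β x - 2) * hsucc))

lemma hasDerivAt_Rfun_lt (ha : 0 < a) (hβ : 0 < β) {x : ℝ}
    (hx : 0 < x) (hxy : x < y) :
    HasDerivAt (Rfun a β y) (-(gammaCDF a β x)^2) x := by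
  have hF := hasDerivAt_gammaCDF ha hβ hx
  have hF1 := hasDerivAt_gammaCDF (a := a+1) (β := β) (by linarith) hβ hx
  have hF2 := hasDerivAt_gammaCDF2 ha hβ hx
  have p1 := ((hasDerivAt_id' x).neg.mul (hF.pow 2))
  have p2 := hasDerivAt_const x (y * (2 * gammaCDF a β y - 1))
  have p3 := (((((hF.pow 2).const_sub 1).add ((hF.const_mul 2).mul hF1)).sub_const
    (2 * gammaCDF (a+1) β y))).const_mul (a/β)
  have p4 := (hF2.const_sub 1).div_const (β * betaFn (1/2) a)
  have hbig := ((p1.add p2).add p3).sub p4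
  have heq : Rfun a β y =ᶠ[nhds x] (fun τ => -τ * (gammaCDF a β τ) ^ 2
      + y * (2 * gammaCDF a β y - 1)
      + a / β * (1 - (gammaCDF a β τ) ^ 2
          + 2 * gammaCDF a β τ * gammaCDF (a + 1) β τ - 2 * gammaCDF (a + 1) β y)
      - (1 - gammaCDF (2 * a) β (2 * τ)) / (β * betaFn (1 / 2) a)) := by
    filter_upwards [eventually_lt_nhds hxy] with τ hτ
    simp only [Rfun, max_eq_left hτ.le]
  have hfinal := HasDerivAt.congr_of_eventuallyEq hbig heq
  have hsucc := gpdf_succ ha hβ hx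
  have hkey := hkey_scalar ha hβ hx
  exact hfinal.congr_deriv (Eq.symm (by simp only [Pi.neg_apply, Pi.pow_apply]; linear_combination hkey - (2*gammaCDF a β x) * hsucc))

lemma Ctail_nonneg (ha : 0 < a) (hβ : 0 < β) : 0 ≤ Ctail a β := by
  unfold Ctail
  have h1 : (0:ℝ) < Real.Gamma a := Real.Gamma_pos_of_pos ha
  have h2 : (0:ℝ) < β ^ a := Real.rpow_pos_of_pos hβ a
  have h3 : (0:ℝ) < (β/2) ^ a := Real.rpow_pos_of_pos (by linarith) a
  positivity

lemma tendsto_tail_sq (ha : 0 < a) (hβ : 0 < β) :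
    Tendsto (fun τ : ℝ => τ * (1 - gammaCDF a β τ)^2) atTop (𝓝 0) := by
  have h0 := tendsto_pow_mul_exp_neg_atTop_nhds_zero 1
  have h1 := h0.comp (Tendsto.const_mul_atTop hβ (tendsto_id (α := ℝ)))
  have hg := h1.const_mul ((Ctail a β)^2 / β)
  rw [mul_zero] at hg
  apply squeeze_zero' ?_ ?_ hg
  · filter_upwards [eventually_ge_atTop (0:ℝ)] with τ hτ
    exact mul_nonneg hτ (sq_nonneg _)
  · filter_upwards [eventually_ge_atTop (0:ℝ)] with τ hτ
    have hC := Ctail_nonneg ha hβ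
    have hb1 := one_sub_gammaCDF_le ha hβ hτ
    have hb0 : 0 ≤ 1 - gammaCDF a β τ := by linarith [gammaCDF_le_one ha hβ τ]
    have h2 : (1 - gammaCDF a β τ)^2 ≤ (Ctail a β * Real.exp (-(β/2) * τ))^2 :=
      pow_le_pow_left₀ hb0 hb1 2
    have h3 : τ * (1 - gammaCDF a β τ)^2 ≤ τ * (Ctail a β * Real.exp (-(β/2) * τ))^2 :=
      mul_le_mul_of_nonneg_left h2 hτ
    have h4 : τ * (Ctail a β * Real.exp (-(β/2) * τ))^2
        = (Ctail a β)^2 / β * ((fun x : ℝ => x ^ (1:ℕ) * Real.exp (-x)) ∘ fun x => β * x) τ := by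
      simp only [Function.comp_apply, pow_one]
      rw [mul_pow, sq (Real.exp _), ← Real.exp_add]
      have : -(β/2) * τ + -(β/2) * τ = -(β * τ) := by ring
      rw [this]
      field_simp
    calc τ * (1 - gammaCDF a β τ)^2 ≤ τ * (Ctail a β * Real.exp (-(β/2) * τ))^2 := h3
      _ = _ := h4

lemma tendsto_Rfun_atTop (ha : 0 < a) (hβ : 0 < β) (y : ℝ) :
    Tendsto (Rfun a β y) atTop (𝓝 0) := by
  have hF := tendsto_gammaCDF_atTop ha hβ
  have hF1 := tendsto_gammaCDF_atTop (a := a+1) (β := β) (by linarith) hβ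
  have hF2 : Tendsto (fun τ : ℝ => gammaCDF (2*a) β (2*τ)) atTop (𝓝 1) :=
    (tendsto_gammaCDF_atTop (a := 2*a) (β := β) (by linarith) hβ).comp
      (Tendsto.const_mul_atTop two_pos (tendsto_id (α := ℝ)))
  have hT1 := (tendsto_tail_sq ha hβ).neg
  have h2 : Tendsto (fun τ => a/β * (1 - (gammaCDF a β τ)^2
      + 2 * gammaCDF a β τ * gammaCDF (a+1) β τ - 2 * gammaCDF (a+1) β τ)) atTop
      (𝓝 (a/β * (1 - (1:ℝ)^2 + 2*1*1 - 2*1))) :=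
    tendsto_const_nhds.mul (((tendsto_const_nhds.sub (hF.pow 2)).add
      ((hF.const_mul 2).mul hF1)).sub (hF1.const_mul 2))
  have h3 : Tendsto (fun τ => (1 - gammaCDF (2*a) β (2*τ)) / (β * betaFn (1/2) a)) atTop
      (𝓝 ((1 - 1) / (β * betaFn (1/2) a))) :=
    (tendsto_const_nhds.sub hF2).div_const _
  have h4 := (hT1.add h2).sub h3
  norm_num at h4
  apply h4.congr'
  filter_upwards [eventually_ge_atTop y] with τ hτ
  simp only [Rfun, max_eq_right hτ]
  ring

end TWAux

theorem twCRPS_gamma (α β : ℝ) (hα : 0 < α) (hβ : 0 < β)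
    (τ y : ℝ) (hτ : 0 ≤ τ) (hy : 0 ≤ y) :
    twCRPS (gammaCDF α β) τ y =
      -τ * (gammaCDF α β τ) ^ 2
        + max y τ * (2 * gammaCDF α β (max y τ) - 1)
        + α / β *
          (1 - (gammaCDF α β τ) ^ 2 + 2 * gammaCDF α β τ * gammaCDF (α + 1) β τ
            - 2 * gammaCDF (α + 1) β (max y τ))
        - (1 - gammaCDF (2 * α) β (2 * τ)) / (β * betaFn (1 / 2) α) := by
  classical
  set D : ℝ → ℝ := fun t => twCRPS (gammaCDF α β) t y - TWAux.Rfun α β y t with hDdef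
  have hDcont : ContinuousOn D (Ici 0) :=
    (TWAux.continuousOn_twCRPS hα hβ hy).sub ((TWAux.continuous_Rfun hα hβ y).continuousOn)
  have hderiv_gt : ∀ x : ℝ, y < x → HasDerivAt D 0 x := by
    intro x hyx
    have hx0 : 0 < x := lt_of_le_of_lt hy hyx
    have h1 := TWAux.hasDerivAt_twCRPS hα hβ hy hx0 (ne_of_gt hyx)
    have h2 := TWAux.hasDerivAt_Rfun_gt (y := y) hα hβ hx0 hyx
    have h3 := h1.sub h2
    have h4 : -(TWAux.gfun α β y x) - -(gammaCDF α β x - 1)^2 = 0 := by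
      rw [TWAux.gfun_of_ge hyx.le]; ring
    rwa [h4] at h3
  have hderiv_lt : ∀ x : ℝ, 0 < x → x < y → HasDerivAt D 0 x := by
    intro x hx0 hxy
    have h1 := TWAux.hasDerivAt_twCRPS hα hβ hy hx0 (ne_of_lt hxy)
    have h2 := TWAux.hasDerivAt_Rfun_lt (y := y) hα hβ hx0 hxy
    have h3 := h1.sub h2
    have h4 : -(TWAux.gfun α β y x) - -(gammaCDF α β x)^2 = 0 := by
      rw [TWAux.gfun_of_lt hxy]; ring
    rwa [h4] at h3
  have htop : Filter.Tendsto D Filter.atTop (nhds 0) := by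
    have := (TWAux.tendsto_twCRPS_atTop hα hβ hy).sub (TWAux.tendsto_Rfun_atTop hα hβ y)
    simpa using this
  have step1 : ∀ x : ℝ, y < x → D x = 0 := by
    intro x hyx
    have hconst : ∀ T, x ≤ T → D T = D x := by
      intro T hT
      have hc := constant_of_has_deriv_right_zero (f := D) (a := x) (b := T)
        (fun u hu => (hderiv_gt u (lt_of_lt_of_le hyx hu.1)).continuousAt.continuousWithinAt)
        (fun u hu => (hderiv_gt u (lt_of_lt_of_le hyx hu.1)).hasDerivWithinAt)
      exact hc T (right_mem_Icc.2 hT)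
    have hEv : D =ᶠ[Filter.atTop] fun _ => D x := by
      filter_upwards [Filter.eventually_ge_atTop x] with T hT
      exact hconst T hT
    have h2 : Filter.Tendsto D Filter.atTop (nhds (D x)) := by
      rw [Filter.tendsto_congr' hEv]; exact tendsto_const_nhds
    exact tendsto_nhds_unique h2 htop
  have stepy : 0 < y → D y = 0 := by
    intro hy0
    have hc : ContinuousAt D y := hDcont.continuousAt (Ici_mem_nhds hy0)
    have h2 : Filter.Tendsto D (nhdsWithin y (Ioi y)) (nhds (D y)) :=
      hc.continuousWithinAt.tendsto
    have h3 : Filter.Tendsto D (nhdsWithin y (Ioi y)) (nhds 0) := by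
      apply Filter.Tendsto.congr' ?_ tendsto_const_nhds
      filter_upwards [self_mem_nhdsWithin] with u hu
      exact (step1 u hu).symm
    exact tendsto_nhds_unique h2 h3
  have step_lt : ∀ x : ℝ, 0 < x → x < y → D x = 0 := by
    intro x hx0 hxy
    have hy0 : 0 < y := lt_trans hx0 hxy
    have hc := constant_of_has_deriv_right_zero (f := D) (a := x) (b := y)
      (hDcont.mono (fun u hu => le_trans hx0.le hu.1))
      (fun u hu => (hderiv_lt u (lt_of_lt_of_le hx0 hu.1) hu.2).hasDerivWithinAt)
    have h4 := hc y (right_mem_Icc.2 hxy.le)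
    rw [stepy hy0] at h4
    exact h4.symm
  have hfinal : D τ = 0 := by
    rcases eq_or_lt_of_le hτ with h0 | hτpos
    · have hc : ContinuousWithinAt D (Ici 0) 0 := hDcont 0 self_mem_Ici
      have h2 : Filter.Tendsto D (nhdsWithin 0 (Ioi 0)) (nhds (D 0)) :=
        hc.tendsto.mono_left (nhdsWithin_mono 0 Ioi_subset_Ici_self)
      have h3 : Filter.Tendsto D (nhdsWithin 0 (Ioi 0)) (nhds 0) := by
        rcases eq_or_lt_of_le hy with hy0 | hy0
        · apply Filter.Tendsto.congr' ?_ tendsto_const_nhds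
          filter_upwards [self_mem_nhdsWithin] with u hu
          exact (step1 u (by rw [← hy0]; exact hu)).symm
        · apply Filter.Tendsto.congr' ?_ tendsto_const_nhds
          have hmem : Ioo (0:ℝ) y ∈ nhdsWithin (0:ℝ) (Ioi 0) :=
            Ioo_mem_nhdsGT_of_mem ⟨le_rfl, hy0⟩
          filter_upwards [hmem] with u hu
          exact (step_lt u hu.1 hu.2).symm
      have h4 := tendsto_nhds_unique h2 h3
      rw [← h0]; exact h4
    · rcases lt_trichotomy τ y with h | h | h
      · exact step_lt τ hτpos h
      · rw [h]; exact stepy (h ▸ hτpos)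
      · exact step1 τ h
  have hres : twCRPS (gammaCDF α β) τ y = TWAux.Rfun α β y τ := by
    have := hfinal
    simp only [hDdef] at this
    linarith
  rw [hres]
  rfl
end

section
/- Let μ ∈ ℝ and 0 < σ < 1, and let F_{μ,σ} denote the log-logistic cumulative distribution function, F_{μ,σ}(x) = 1/(1 + exp(−(log x − μ)/σ)) for x > 0 and F_{μ,σ}(x) = 0 for x ≤ 0. Define the upper incomplete beta function B_u(x; p, q) = ∫_x^1 t^{p−1}(1 − t)^{q−1} dt for 0 ≤ x ≤ 1. Then for every threshold τ ≥ 0 and observation y > 0, writing v = max(y, τ): twCRPS_τ(F_{μ,σ}, y) = −τ F_{μ,σ}(τ)² + v (2 F_{μ,σ}(v) − 1) + 2 e^{μ} (B_u(F_{μ,σ}(v); 1 + σ, 1 − σ) − B_u(F_{μ,σ}(τ); 2 + σ, 1 − σ)). -/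
open MeasureTheory Set Filter

/-- Log-logistic CDF with log-location `μ` and log-scale `σ`:
`F_{μ,σ}(x) = 1/(1 + exp(−(log x − μ)/σ))` for `x > 0`, and `0` for `x ≤ 0`. -/
noncomputable def logLogisticCDF (μ σ : ℝ) (x : ℝ) : ℝ :=
  if 0 < x then 1 / (1 + Real.exp (-(Real.log x - μ) / σ)) else 0

/-- Upper incomplete beta function `B_u(x; p, q) = ∫_x^1 t^{p−1}(1 − t)^{q−1} dt`. -/
noncomputable def upperIncBeta (x p q : ℝ) : ℝ :=
  ∫ t in Set.Ioc x (1 : ℝ), t ^ (p - 1) * (1 - t) ^ (q - 1)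

namespace TwAux

variable {μ σ : ℝ}

lemma ll_eq (μ σ : ℝ) {z : ℝ} (hz : 0 < z) :
    logLogisticCDF μ σ z = 1 / (1 + Real.exp (-(Real.log z - μ) / σ)) := if_pos hz

lemma ll_pos (μ σ : ℝ) {z : ℝ} (hz : 0 < z) : 0 < logLogisticCDF μ σ z := by
  rw [ll_eq μ σ hz]; positivity

lemma ll_lt_one (μ σ : ℝ) {z : ℝ} (hz : 0 < z) : logLogisticCDF μ σ z < 1 := by
  rw [ll_eq μ σ hz]
  have h := Real.exp_pos (-(Real.log z - μ) / σ)
  rw [div_lt_one (by linarith)]; linarith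

lemma ll_nonneg (μ σ z : ℝ) : 0 ≤ logLogisticCDF μ σ z := by
  unfold logLogisticCDF; split_ifs with h
  · positivity
  · exact le_rfl

lemma ll_le_one (μ σ z : ℝ) : logLogisticCDF μ σ z ≤ 1 := by
  rcases lt_or_ge 0 z with h | h
  · exact (ll_lt_one μ σ h).le
  · unfold logLogisticCDF; rw [if_neg (not_lt.2 h)]; norm_num

lemma ll_measurable (μ σ : ℝ) : Measurable (logLogisticCDF μ σ) := by
  unfold logLogisticCDF
  refine Measurable.ite ?_ ?_ measurable_const
  · exact measurableSet_lt measurable_const measurable_id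
  · have h1 : Measurable fun x : ℝ => -(Real.log x - μ) / σ :=
      ((Real.measurable_log.sub measurable_const).neg).div_const σ
    exact measurable_const.div (measurable_const.add h1.exp)

lemma ll_hasDerivAt (hσ0 : 0 < σ) {z : ℝ} (hz : 0 < z) :
    HasDerivAt (logLogisticCDF μ σ)
      (logLogisticCDF μ σ z * (1 - logLogisticCDF μ σ z) / (σ * z)) z := by
  have hlog : HasDerivAt Real.log z⁻¹ z := Real.hasDerivAt_log hz.ne'
  have h2 : HasDerivAt (fun z => -(Real.log z - μ) / σ) (-z⁻¹ / σ) z :=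
    ((hlog.sub_const μ).neg).div_const σ
  have h3 := h2.exp
  have hne : (1 : ℝ) + Real.exp (-(Real.log z - μ) / σ) ≠ 0 := by positivity
  have h4 := (h3.const_add 1).inv hne
  have h5 : HasDerivAt (logLogisticCDF μ σ)
      (-(Real.exp (-(Real.log z - μ) / σ) * (-z⁻¹ / σ)) /
        (1 + Real.exp (-(Real.log z - μ) / σ)) ^ 2) z := by
    refine h4.congr_of_eventuallyEq ?_
    filter_upwards [eventually_gt_nhds hz] with x hx
    rw [ll_eq μ σ hx, one_div]; rfl
  convert h5 using 1
  rw [ll_eq μ σ hz]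
  have he : (0:ℝ) < Real.exp (-(Real.log z - μ) / σ) := Real.exp_pos _
  field_simp
  ring

lemma ll_key (hσ0 : 0 < σ) {z : ℝ} (hz : 0 < z) :
    Real.exp μ * (logLogisticCDF μ σ z) ^ σ = z * (1 - logLogisticCDF μ σ z) ^ σ := by
  have ht := ll_pos μ σ hz
  have ht1 := ll_lt_one μ σ hz
  have hrt : logLogisticCDF μ σ z =
      (1 - logLogisticCDF μ σ z) * Real.exp ((Real.log z - μ) / σ) := by
    rw [ll_eq μ σ hz]
    have he : (0:ℝ) < Real.exp (-(Real.log z - μ) / σ) := Real.exp_pos _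
    rw [show (Real.log z - μ) / σ = -(-(Real.log z - μ) / σ) by ring, Real.exp_neg]
    field_simp
    ring
  have h1 : (Real.exp ((Real.log z - μ) / σ)) ^ σ = z / Real.exp μ := by
    rw [← Real.exp_mul, div_mul_cancel₀ _ hσ0.ne', Real.exp_sub, Real.exp_log hz]
  have h2 : (logLogisticCDF μ σ z) ^ σ =
      (1 - logLogisticCDF μ σ z) ^ σ * (z / Real.exp μ) := by
    conv_lhs => rw [hrt]
    rw [Real.mul_rpow (by linarith) (Real.exp_pos _).le, h1]
  rw [h2]
  field_simp

lemma beta_meas (p q : ℝ) : Measurable fun t : ℝ => t ^ (p - 1) * (1 - t) ^ (q - 1) := by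
  fun_prop

lemma beta_ii {p q : ℝ} (hp : 1 ≤ p) (hq : (-1:ℝ) < q - 1) {a b : ℝ}
    (ha : a ∈ Icc (0:ℝ) 1) (hb : b ∈ Icc (0:ℝ) 1) :
    IntervalIntegrable (fun t => t ^ (p - 1) * (1 - t) ^ (q - 1)) volume a b := by
  have hbase : IntervalIntegrable (fun t : ℝ => (1 - t) ^ (q - 1)) volume a b := by
    have h0 : IntervalIntegrable (fun x : ℝ => x ^ (q - 1)) volume (1 - a) (1 - b) :=
      intervalIntegral.intervalIntegrable_rpow' hq
    have := h0.comp_sub_left 1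
    simpa using this
  refine hbase.mono_fun ((beta_meas p q).aestronglyMeasurable.restrict) ?_
  rw [Filter.EventuallyLE]
  refine (ae_restrict_iff' measurableSet_uIoc).mpr (ae_of_all _ fun x hx => ?_)
  have hx0 : 0 ≤ x := le_trans (le_min ha.1 hb.1) hx.1.le
  have hx1 : x ≤ 1 := le_trans hx.2 (max_le ha.2 hb.2)
  have h1x : 0 ≤ 1 - x := by linarith
  rw [Real.norm_eq_abs, Real.norm_eq_abs,
    abs_of_nonneg (mul_nonneg (Real.rpow_nonneg hx0 _) (Real.rpow_nonneg h1x _)),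
    abs_of_nonneg (Real.rpow_nonneg h1x _)]
  exact mul_le_of_le_one_left (Real.rpow_nonneg h1x _)
    (Real.rpow_le_one hx0 hx1 (by linarith))

lemma Bu_eq {p q : ℝ} (hp : 1 ≤ p) (hq : (-1:ℝ) < q - 1) {x : ℝ} (hx : x ∈ Icc (0:ℝ) 1) :
    upperIncBeta x p q =
      upperIncBeta 0 p q - ∫ t in Ioc (0:ℝ) x, t ^ (p - 1) * (1 - t) ^ (q - 1) := by
  have h1 : IntegrableOn (fun t : ℝ => t ^ (p - 1) * (1 - t) ^ (q - 1)) (Ioc 0 x) volume :=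
    (intervalIntegrable_iff_integrableOn_Ioc_of_le hx.1).1
      (beta_ii hp hq ⟨le_rfl, zero_le_one⟩ hx)
  have h2 : IntegrableOn (fun t : ℝ => t ^ (p - 1) * (1 - t) ^ (q - 1)) (Ioc x 1) volume :=
    (intervalIntegrable_iff_integrableOn_Ioc_of_le hx.2).1
      (beta_ii hp hq hx ⟨zero_le_one, le_rfl⟩)
  have hdisj : Disjoint (Ioc (0:ℝ) x) (Ioc x 1) := Set.Ioc_disjoint_Ioc_of_le le_rfl
  have hsplit := setIntegral_union hdisj measurableSet_Ioc h1 h2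
  rw [Ioc_union_Ioc_eq_Ioc hx.1 hx.2] at hsplit
  unfold upperIncBeta
  linarith [hsplit]

lemma Bu_hasDerivAt {p q : ℝ} (hp : 1 ≤ p) (hq : (-1:ℝ) < q - 1) {x : ℝ}
    (hx : x ∈ Ioo (0:ℝ) 1) :
    HasDerivAt (fun x => upperIncBeta x p q) (-(x ^ (p - 1) * (1 - x) ^ (q - 1))) x := by
  have hii : IntervalIntegrable (fun t : ℝ => t ^ (p - 1) * (1 - t) ^ (q - 1)) volume 0 x :=
    beta_ii hp hq ⟨le_rfl, zero_le_one⟩ ⟨hx.1.le, hx.2.le⟩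
  have hmeas : StronglyMeasurableAtFilter
      (fun t : ℝ => t ^ (p - 1) * (1 - t) ^ (q - 1)) (nhds x) volume :=
    ⟨univ, univ_mem, ((beta_meas p q).aestronglyMeasurable).restrict⟩
  have hcont : ContinuousAt (fun t : ℝ => t ^ (p - 1) * (1 - t) ^ (q - 1)) x := by
    have h1 : ContinuousAt (fun t : ℝ => t ^ (p - 1)) x :=
      Real.continuousAt_rpow_const x _ (Or.inl hx.1.ne')
    have h2 : ContinuousAt (fun t : ℝ => (1 - t) ^ (q - 1)) x := by
      have h3 := Real.continuousAt_rpow_const (1 - x) (q - 1)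
        (Or.inl (by have := hx.2; intro h; linarith [sub_eq_zero.1 h]))
      exact h3.comp ((continuous_const.sub continuous_id).continuousAt)
    exact h1.mul h2
  have hD := (intervalIntegral.integral_hasDerivAt_right hii hmeas hcont).const_sub
    (upperIncBeta 0 p q)
  refine HasDerivAt.congr_of_eventuallyEq hD ?_
  filter_upwards [Ioo_mem_nhds hx.1 hx.2] with u hu
  rw [Bu_eq hp hq ⟨hu.1.le, hu.2.le⟩, intervalIntegral.integral_of_le hu.1.le]

lemma Bu_contOn {p q : ℝ} (hp : 1 ≤ p) (hq : (-1:ℝ) < q - 1) :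
    ContinuousOn (fun x => upperIncBeta x p q) (Icc (0:ℝ) 1) := by
  have hInt : IntegrableOn (fun t : ℝ => t ^ (p - 1) * (1 - t) ^ (q - 1)) (Icc 0 1) volume :=
    (integrableOn_Icc_iff_integrableOn_Ioc enorm_ne_top).2
      ((intervalIntegrable_iff_integrableOn_Ioc_of_le zero_le_one).1
        (beta_ii hp hq ⟨le_rfl, zero_le_one⟩ ⟨zero_le_one, le_rfl⟩))
  have h1 := intervalIntegral.continuousOn_primitive hInt
  exact (continuousOn_const.sub h1).congr fun x hx => Bu_eq hp hq hx

lemma Bu_one (p q : ℝ) : upperIncBeta 1 p q = 0 := by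
  unfold upperIncBeta; simp

lemma ll_contOn (hσ0 : 0 < σ) : ContinuousOn (logLogisticCDF μ σ) (Ici 0) := by
  intro x hx
  rcases eq_or_lt_of_le (mem_Ici.1 hx) with h0 | hpos
  · rw [← h0]
    unfold ContinuousWithinAt
    rw [show logLogisticCDF μ σ 0 = 0 by unfold logLogisticCDF; rw [if_neg (lt_irrefl 0)]]
    rw [← Set.Ioi_union_left, nhdsWithin_union, Filter.tendsto_sup]
    constructor
    · have h1 : Tendsto Real.log (nhdsWithin (0:ℝ) (Ioi 0)) atBot :=
        Real.tendsto_log_nhdsGT_zero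
      have h2 : Tendsto (fun z : ℝ => -(Real.log z - μ) / σ) (nhdsWithin (0:ℝ) (Ioi 0)) atTop := by
        apply Tendsto.atTop_div_const hσ0
        exact tendsto_neg_atBot_atTop.comp (tendsto_atBot_add_const_right _ (-μ)
          (by simpa [sub_eq_add_neg] using h1))
      have h3 : Tendsto (fun z : ℝ => 1 + Real.exp (-(Real.log z - μ) / σ))
          (nhdsWithin (0:ℝ) (Ioi 0)) atTop :=
        tendsto_atTop_add_const_left _ 1 (Real.tendsto_exp_atTop.comp h2)
      have h4 : Tendsto (fun z : ℝ => 1 / (1 + Real.exp (-(Real.log z - μ) / σ)))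
          (nhdsWithin (0:ℝ) (Ioi 0)) (nhds 0) :=
        Tendsto.div_atTop tendsto_const_nhds h3
      refine h4.congr' ?_
      filter_upwards [self_mem_nhdsWithin] with z hz
      exact (ll_eq μ σ hz).symm
    · rw [nhdsWithin_singleton]
      have : logLogisticCDF μ σ 0 = 0 := by
        unfold logLogisticCDF; rw [if_neg (lt_irrefl 0)]
      simpa [this] using (tendsto_pure_nhds (logLogisticCDF μ σ) 0)
  · exact ((ll_hasDerivAt hσ0 hpos).continuousAt).continuousWithinAt

lemma ll_tendsto_one (hσ0 : 0 < σ) : Tendsto (logLogisticCDF μ σ) atTop (nhds 1) := by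
  have h1 : Tendsto (fun z : ℝ => -(Real.log z - μ) / σ) atTop atBot := by
    apply Tendsto.atBot_div_const hσ0
    exact tendsto_neg_atTop_atBot.comp (tendsto_atTop_add_const_right _ (-μ)
      (by simpa [sub_eq_add_neg] using Real.tendsto_log_atTop))
  have h2 : Tendsto (fun z : ℝ => Real.exp (-(Real.log z - μ) / σ)) atTop (nhds 0) :=
    Real.tendsto_exp_atBot.comp h1
  have h3 : Tendsto (fun z : ℝ => 1 / (1 + Real.exp (-(Real.log z - μ) / σ))) atTop (nhds 1) := by
    have h5 : Tendsto (fun z : ℝ => 1 + Real.exp (-(Real.log z - μ) / σ)) atTop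
        (nhds (1 + 0)) := tendsto_const_nhds.add h2
    have h4 := (tendsto_const_nhds (x := (1:ℝ))).div h5 (by norm_num)
    simpa [Pi.div_def] using h4
  refine Tendsto.congr' ?_ h3
  filter_upwards [eventually_gt_atTop 0] with z hz
  exact (ll_eq μ σ hz).symm

lemma tail_tendsto (hσ0 : 0 < σ) (hσ1 : σ < 1) :
    Tendsto (fun z => z * (1 - logLogisticCDF μ σ z) ^ 2) atTop (nhds 0) := by
  have hexp : 0 < 2 / σ - 1 := by
    have : 1 < 2 / σ := (one_lt_div hσ0).2 (by linarith)
    linarith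
  have hlim : Tendsto (fun z : ℝ => Real.exp (2 * μ / σ) * z ^ (1 - 2 / σ)) atTop (nhds 0) := by
    have h := (tendsto_rpow_neg_atTop hexp).const_mul (Real.exp (2 * μ / σ))
    simpa [neg_sub] using h
  apply squeeze_zero' ?_ ?_ hlim
  · filter_upwards [eventually_gt_atTop 0] with z hz
    exact mul_nonneg hz.le (sq_nonneg _)
  · filter_upwards [eventually_gt_atTop 0] with z hz
    have hFle : 1 - logLogisticCDF μ σ z ≤ Real.exp (-(Real.log z - μ) / σ) := by
      rw [ll_eq μ σ hz]
      have he : (0:ℝ) < Real.exp (-(Real.log z - μ) / σ) := Real.exp_pos _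
      have heq : 1 - 1 / (1 + Real.exp (-(Real.log z - μ) / σ)) =
          Real.exp (-(Real.log z - μ) / σ) / (1 + Real.exp (-(Real.log z - μ) / σ)) := by
        field_simp
        ring
      rw [heq]
      exact div_le_self he.le (by linarith)
    have hF0 : 0 ≤ 1 - logLogisticCDF μ σ z := by linarith [ll_le_one μ σ z]
    calc z * (1 - logLogisticCDF μ σ z) ^ 2
        ≤ z * (Real.exp (-(Real.log z - μ) / σ)) ^ 2 :=
          mul_le_mul_of_nonneg_left (pow_le_pow_left₀ hF0 hFle 2) hz.le
      _ = Real.exp (2 * μ / σ) * z ^ (1 - 2 / σ) := by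
          have hzz : z = Real.exp (Real.log z) := (Real.exp_log hz).symm
          rw [Real.rpow_def_of_pos hz, sq, ← Real.exp_add, ← Real.exp_add]
          nth_rewrite 1 [hzz]
          rw [← Real.exp_add]
          congr 1
          field_simp
          ring

lemma Bu_comp_tendsto (hσ0 : 0 < σ) {p q : ℝ} (hp : 1 ≤ p) (hq : (-1:ℝ) < q - 1) :
    Tendsto (fun z => upperIncBeta (logLogisticCDF μ σ z) p q) atTop (nhds 0) := by
  have hc : ContinuousWithinAt (fun x => upperIncBeta x p q) (Icc (0:ℝ) 1) 1 :=
    (Bu_contOn hp hq) 1 ⟨zero_le_one, le_rfl⟩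
  have hF : Tendsto (logLogisticCDF μ σ) atTop (nhdsWithin 1 (Icc 0 1)) :=
    tendsto_nhdsWithin_of_tendsto_nhds_of_eventually_within _ (ll_tendsto_one hσ0)
      (Eventually.of_forall fun z => ⟨ll_nonneg μ σ z, ll_le_one μ σ z⟩)
  have := hc.tendsto.comp hF
  simpa [Function.comp_def, Bu_one] using this

end TwAux

open TwAux

theorem twCRPS_logLogistic (μ σ : ℝ) (hσ0 : 0 < σ) (hσ1 : σ < 1)
    (τ y : ℝ) (hτ : 0 ≤ τ) (hy : 0 < y) :
    twCRPS (logLogisticCDF μ σ) τ y =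
      -τ * (logLogisticCDF μ σ τ) ^ 2
        + max y τ * (2 * logLogisticCDF μ σ (max y τ) - 1)
        + 2 * Real.exp μ *
          (upperIncBeta (logLogisticCDF μ σ (max y τ)) (1 + σ) (1 - σ)
            - upperIncBeta (logLogisticCDF μ σ τ) (2 + σ) (1 - σ)) := by
  have hvy : y ≤ max y τ := le_max_left _ _
  have hvτ : τ ≤ max y τ := le_max_right _ _
  have hv0 : 0 < max y τ := lt_of_lt_of_le hy hvy
  set v := max y τ with hvdef
  have hp1 : (1:ℝ) ≤ 1 + σ := by linarith
  have hp2 : (1:ℝ) ≤ 2 + σ := by linarith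
  have hq : (-1:ℝ) < (1 - σ) - 1 := by linarith
  set E := Real.exp μ with hE
  set Fn := logLogisticCDF μ σ with hFn
  set H : ℝ → ℝ := fun z => z * Fn z ^ 2 + 2 * E * upperIncBeta (Fn z) (2 + σ) (1 - σ) with hH
  set G : ℝ → ℝ := fun z => z * (1 - Fn z) ^ 2
      - 2 * E * (upperIncBeta (Fn z) (1 + σ) (1 - σ) - upperIncBeta (Fn z) (2 + σ) (1 - σ))
    with hG
  -- basic facts at a point z > 0
  have hfacts : ∀ z : ℝ, 0 < z → 0 < Fn z ∧ Fn z < 1 ∧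
      HasDerivAt Fn (Fn z * (1 - Fn z) / (σ * z)) z ∧ E * Fn z ^ σ = z * (1 - Fn z) ^ σ := by
    intro z hz
    have h1 := ll_pos μ σ hz
    have h2 := ll_lt_one μ σ hz
    have h3 := ll_hasDerivAt (μ := μ) hσ0 hz
    have h4 := ll_key (μ := μ) hσ0 hz
    rw [← hFn] at h1 h2 h3 h4
    rw [← hE] at h4
    exact ⟨h1, h2, h3, h4⟩
  have hHd : ∀ z ∈ Ioi (0:ℝ), HasDerivAt H (Fn z ^ 2) z := by
    intro z hz
    obtain ⟨ht, ht1, hd, key⟩ := hfacts z hz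
    have hcomp2 : HasDerivAt (fun w => upperIncBeta (Fn w) (2 + σ) (1 - σ))
        (-(Fn z ^ ((2 + σ) - 1) * (1 - Fn z) ^ ((1 - σ) - 1)) * (Fn z * (1 - Fn z) / (σ * z)))
        z := HasDerivAt.comp z (Bu_hasDerivAt hp2 hq ⟨ht, ht1⟩) hd
    have hmul : HasDerivAt (fun w => w * Fn w ^ 2)
        (1 * Fn z ^ 2 + z * (((2:ℕ):ℝ) * Fn z ^ 1 * (Fn z * (1 - Fn z) / (σ * z)))) z :=
      (hasDerivAt_id z).mul (hd.pow 2)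
    have hsum := hmul.add (HasDerivAt.const_mul (2 * E) hcomp2)
    rw [hH]
    have hz0 : (0:ℝ) < z := hz
    have hA : (0:ℝ) < Fn z ^ σ := Real.rpow_pos_of_pos ht σ
    have hB : (0:ℝ) < (1 - Fn z) ^ σ := Real.rpow_pos_of_pos (by linarith) σ
    have hexp : E = z * (1 - Fn z) ^ σ / Fn z ^ σ := by
      rw [eq_div_iff hA.ne']; exact key
    have heq : Fn z ^ 2 = 1 * Fn z ^ 2 + z * (((2:ℕ):ℝ) * Fn z ^ 1 * (Fn z * (1 - Fn z) / (σ * z)))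
        + 2 * E * (-(Fn z ^ ((2 + σ) - 1) * (1 - Fn z) ^ ((1 - σ) - 1)) *
          (Fn z * (1 - Fn z) / (σ * z))) := by
      rw [show (2 + σ) - 1 = 1 + σ by ring, show (1 - σ) - 1 = -σ by ring,
        Real.rpow_add ht 1 σ, Real.rpow_one,
        Real.rpow_neg (by linarith : (0:ℝ) ≤ 1 - Fn z) σ, hexp]
      field_simp
      ring
    rw [heq]
    exact hsum
  have hGd : ∀ z ∈ Ioi (0:ℝ), HasDerivAt G ((1 - Fn z) ^ 2) z := by
    intro z hz
    obtain ⟨ht, ht1, hd, key⟩ := hfacts z hz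
    have hcomp1 : HasDerivAt (fun w => upperIncBeta (Fn w) (1 + σ) (1 - σ))
        (-(Fn z ^ ((1 + σ) - 1) * (1 - Fn z) ^ ((1 - σ) - 1)) * (Fn z * (1 - Fn z) / (σ * z)))
        z := HasDerivAt.comp z (Bu_hasDerivAt hp1 hq ⟨ht, ht1⟩) hd
    have hcomp2 : HasDerivAt (fun w => upperIncBeta (Fn w) (2 + σ) (1 - σ))
        (-(Fn z ^ ((2 + σ) - 1) * (1 - Fn z) ^ ((1 - σ) - 1)) * (Fn z * (1 - Fn z) / (σ * z)))
        z := HasDerivAt.comp z (Bu_hasDerivAt hp2 hq ⟨ht, ht1⟩) hd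
    have hmul : HasDerivAt (fun w => w * (1 - Fn w) ^ 2)
        (1 * (1 - Fn z) ^ 2 + z * (((2:ℕ):ℝ) * (1 - Fn z) ^ 1 * (-(Fn z * (1 - Fn z) / (σ * z)))))
        z := (hasDerivAt_id z).mul ((hd.const_sub 1).pow 2)
    have hsum := hmul.sub (HasDerivAt.const_mul (2 * E) (hcomp1.sub hcomp2))
    rw [hG]
    have hz0 : (0:ℝ) < z := hz
    have hA : (0:ℝ) < Fn z ^ σ := Real.rpow_pos_of_pos ht σ
    have hB : (0:ℝ) < (1 - Fn z) ^ σ := Real.rpow_pos_of_pos (by linarith) σ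
    have hexp : E = z * (1 - Fn z) ^ σ / Fn z ^ σ := by
      rw [eq_div_iff hA.ne']; exact key
    have heq : (1 - Fn z) ^ 2 =
        1 * (1 - Fn z) ^ 2 + z * (((2:ℕ):ℝ) * (1 - Fn z) ^ 1 * (-(Fn z * (1 - Fn z) / (σ * z))))
        - 2 * E * ((-(Fn z ^ ((1 + σ) - 1) * (1 - Fn z) ^ ((1 - σ) - 1)) *
            (Fn z * (1 - Fn z) / (σ * z)))
          - (-(Fn z ^ ((2 + σ) - 1) * (1 - Fn z) ^ ((1 - σ) - 1)) *
            (Fn z * (1 - Fn z) / (σ * z)))) := by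
      rw [show (2 + σ) - 1 = 1 + σ by ring, show (1 + σ) - 1 = σ by ring,
        show (1 - σ) - 1 = -σ by ring,
        Real.rpow_add ht 1 σ, Real.rpow_one,
        Real.rpow_neg (by linarith : (0:ℝ) ≤ 1 - Fn z) σ, hexp]
      field_simp
      ring
    rw [heq]
    exact hsum
  -- FTC on [τ, v]
  have hsub : Icc τ v ⊆ Ici (0:ℝ) := fun x hx => le_trans hτ hx.1
  have hFcont : ContinuousOn Fn (Icc τ v) := by
    have := (ll_contOn (μ := μ) hσ0).mono hsub
    rw [← hFn] at this; exact this
  have hmaps : MapsTo Fn (Icc τ v) (Icc (0:ℝ) 1) := by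
    intro x _
    have h1 := ll_nonneg μ σ x
    have h2 := ll_le_one μ σ x
    rw [← hFn] at h1 h2
    exact ⟨h1, h2⟩
  have hHcont : ContinuousOn H (Icc τ v) := by
    rw [hH]
    exact (continuousOn_id.mul (hFcont.pow 2)).add
      (continuousOn_const.mul ((Bu_contOn hp2 hq).comp hFcont hmaps))
  have hFsq_ii : IntervalIntegrable (fun z => Fn z ^ 2) volume τ v := by
    apply ContinuousOn.intervalIntegrable
    rw [uIcc_of_le hvτ]
    exact hFcont.pow 2
  have hftc : ∫ z in τ..v, Fn z ^ 2 = H v - H τ :=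
    intervalIntegral.integral_eq_sub_of_hasDeriv_right_of_le hvτ hHcont
      (fun x hx => ((hHd x (lt_of_le_of_lt hτ hx.1)).hasDerivWithinAt)) hFsq_ii
  -- tail integral
  have hGtend : Tendsto G atTop (nhds 0) := by
    have h1 := tail_tendsto (μ := μ) hσ0 hσ1
    have h2 := (Bu_comp_tendsto (μ := μ) hσ0 hp1 hq).sub (Bu_comp_tendsto (μ := μ) hσ0 hp2 hq)
    rw [← hFn] at h1 h2
    have h3 := h1.sub (h2.const_mul (2 * E))
    rw [hG]
    simpa using h3
  have hGcw : ContinuousWithinAt G (Ici v) v := ((hGd v hv0).continuousAt).continuousWithinAt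
  have hGderivs : ∀ x ∈ Ioi v, HasDerivAt G ((1 - Fn x) ^ 2) x :=
    fun x hx => hGd x (lt_trans hv0 hx)
  have htail : ∫ z in Ioi v, (1 - Fn z) ^ 2 = 0 - G v :=
    integral_Ioi_of_hasDerivAt_of_nonneg hGcw hGderivs (fun x _ => sq_nonneg _) hGtend
  have hint_tail : IntegrableOn (fun z => (1 - Fn z) ^ 2) (Ioi v) volume :=
    integrableOn_Ioi_deriv_of_nonneg hGcw hGderivs (fun x _ => sq_nonneg _) hGtend
  -- congruence on the tail
  have hcong_tail : EqOn (fun z => (Fn z - if y ≤ z then (1:ℝ) else 0) ^ 2)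
      (fun z => (1 - Fn z) ^ 2) (Ioi v) := by
    intro z hz
    simp only
    rw [if_pos (le_trans hvy (le_of_lt hz))]
    ring
  have hint_tail' : IntegrableOn (fun z => (Fn z - if y ≤ z then (1:ℝ) else 0) ^ 2)
      (Ioi v) volume := hint_tail.congr_fun (fun z hz => (hcong_tail hz).symm) measurableSet_Ioi
  have hmeas_int : AEStronglyMeasurable (fun z => (Fn z - if y ≤ z then (1:ℝ) else 0) ^ 2)
      (volume.restrict (Ioc τ v)) := by
    have hm : Measurable fun z => (Fn z - if y ≤ z then (1:ℝ) else 0) ^ 2 := by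
      have h1 : Measurable Fn := by rw [hFn]; exact ll_measurable μ σ
      have h2 : Measurable fun z : ℝ => if y ≤ z then (1:ℝ) else 0 :=
        Measurable.ite (measurableSet_le measurable_const measurable_id)
          measurable_const measurable_const
      exact (h1.sub h2).pow_const 2
    exact hm.aestronglyMeasurable
  have hint_head : IntegrableOn (fun z => (Fn z - if y ≤ z then (1:ℝ) else 0) ^ 2)
      (Ioc τ v) volume := by
    apply Integrable.mono' (g := fun _ => (1:ℝ))
      (integrableOn_const measure_Ioc_lt_top.ne) hmeas_int
    refine ae_of_all _ fun z => ?_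
    have h0 := ll_nonneg μ σ z
    have h1 := ll_le_one μ σ z
    rw [← hFn] at h0 h1
    have habs : |Fn z - if y ≤ z then (1:ℝ) else 0| ≤ 1 := by
      split_ifs with h <;> rw [abs_le] <;> constructor <;> linarith
    calc ‖(Fn z - if y ≤ z then (1:ℝ) else 0) ^ 2‖
        = |Fn z - if y ≤ z then (1:ℝ) else 0| ^ 2 := by rw [Real.norm_eq_abs, abs_pow]
      _ ≤ 1 := pow_le_one₀ (abs_nonneg _) habs
  -- split the integral
  have hsplit : (∫ z in Ioi τ, (Fn z - if y ≤ z then (1:ℝ) else 0) ^ 2) =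
      (∫ z in Ioc τ v, (Fn z - if y ≤ z then (1:ℝ) else 0) ^ 2)
      + ∫ z in Ioi v, (Fn z - if y ≤ z then (1:ℝ) else 0) ^ 2 := by
    rw [← Ioc_union_Ioi_eq_Ioi hvτ]
    exact setIntegral_union (Ioc_disjoint_Ioi le_rfl) measurableSet_Ioi hint_head hint_tail'
  -- head congruence (a.e.)
  have hhead : (∫ z in Ioc τ v, (Fn z - if y ≤ z then (1:ℝ) else 0) ^ 2)
      = ∫ z in Ioc τ v, Fn z ^ 2 := by
    apply setIntegral_congr_ae measurableSet_Ioc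
    have hyae : ∀ᵐ (z : ℝ), z ≠ y := by
      rw [ae_iff]
      have hset : {z : ℝ | ¬ z ≠ y} = {y} := by ext w; simp
      rw [hset]
      exact measure_singleton y
    filter_upwards [hyae] with z hzne hmem
    have hnot : ¬ y ≤ z := by
      intro hle
      have hlt : y < z := lt_of_le_of_ne hle (Ne.symm hzne)
      rcases max_choice y τ with h | h
      · have : z ≤ y := by rw [hvdef, h] at hmem; exact hmem.2
        linarith
      · have : z ≤ τ := by rw [hvdef, h] at hmem; exact hmem.2
        exact absurd hmem.1 (not_lt.2 this)
    rw [if_neg hnot]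
    ring
  have htail2 : (∫ z in Ioi v, (Fn z - if y ≤ z then (1:ℝ) else 0) ^ 2)
      = ∫ z in Ioi v, (1 - Fn z) ^ 2 :=
    setIntegral_congr_fun measurableSet_Ioi hcong_tail
  have hIoc : (∫ z in Ioc τ v, Fn z ^ 2) = H v - H τ := by
    rw [← intervalIntegral.integral_of_le hvτ]
    exact hftc
  unfold twCRPS
  rw [hsplit, hhead, htail2, htail, hIoc, hH, hG]
  ring
end
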